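/- arXiv:1906.10498 — 3 statements merged into one kernel-verified Lean document; each statement's English description precedes it below -/
import Mathlib

section
/- Suppose A ∈ (0,1) a.s. and P(log((1-A)/A) > x) = x^{-α} L(x) for all x > η, where α > 1, η > 0 and L is slowly varying at infinity. Then lim_{m→∞} P(Z_1 > m) / [(log m)^{-α} L(log m)] = 1, where conditionally on A, Z_1 is geometric with success probability A (P(Z_1 = k | A) = A(1-A)^k). -/
open MeasureTheory ProbabilityTheory Filter Set

section AuxAnalytic
open Real

lemma aux_low (a u : ℝ) (h0 : 0 < a) (h1 : a < 1) (hu : 0 < u)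
    (h : u < (1-a)/a) : (1 + u⁻¹)⁻¹ ≤ 1 - a := by
  have h1a : (0:ℝ) < 1 - a := by linarith
  have hua : u * a < 1 - a := (lt_div_iff₀ h0).mp h
  have hinv : a < (1-a) * u⁻¹ := by
    rw [← div_eq_mul_inv]
    exact (lt_div_iff₀ hu).mpr (by linarith)
  rw [inv_eq_one_div, div_le_iff₀ (by positivity)]
  nlinarith

lemma aux_high (a u : ℝ) (h0 : 0 < a) (h1 : a < 1) (hu : 1 ≤ u)
    (h : (1-a)/a ≤ u) : 1 - a ≤ 1 - (2*u)⁻¹ := by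
  have hua : 1 - a ≤ u * a := by
    have := (div_le_iff₀ h0).mp h
    linarith
  have key : (2*u)⁻¹ ≤ a := by
    rw [inv_eq_one_div, div_le_iff₀ (by positivity)]
    nlinarith
  linarith

lemma aux_exp_limit (s c : ℝ) (hs0 : 0 < s) (hs1 : s < 1) (hc : 0 ≤ c) :
    Tendsto (fun m : ℕ => Real.exp (-(m:ℝ) ^ (1-s) / 2) * (Real.log m) ^ c)
      atTop (nhds 0) := by
  have h1s : (0:ℝ) < 1 - s := by linarith
  have hy : Tendsto (fun m : ℕ => (m:ℝ) ^ (1-s)) atTop atTop :=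
    (tendsto_rpow_atTop h1s).comp tendsto_natCast_atTop_atTop
  have hlo := isLittleO_log_rpow_atTop (r := (1-s)) h1s
  have hev : ∀ᶠ x : ℝ in atTop, |Real.log x| ≤ 1 * |x ^ (1-s)| :=
    hlo.bound one_pos
  have hfin : Tendsto (fun y : ℝ => y ^ c * Real.exp (-(1/2) * y)) atTop (nhds 0) :=
    tendsto_rpow_mul_exp_neg_mul_atTop_nhds_zero c (1/2) (by norm_num)
  have hcomp : Tendsto (fun m : ℕ => ((m:ℝ) ^ (1-s)) ^ c * Real.exp (-(1/2) * (m:ℝ) ^ (1-s)))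
      atTop (nhds 0) := hfin.comp hy
  have hnn : ∀ᶠ m : ℕ in atTop, 0 ≤ Real.exp (-(m:ℝ) ^ (1-s) / 2) * (Real.log m) ^ c := by
    filter_upwards [eventually_ge_atTop 1] with m hm
    have : (0:ℝ) ≤ Real.log m := Real.log_nonneg (by exact_mod_cast hm)
    positivity
  have hub : ∀ᶠ m : ℕ in atTop,
      Real.exp (-(m:ℝ) ^ (1-s) / 2) * (Real.log m) ^ c
        ≤ ((m:ℝ) ^ (1-s)) ^ c * Real.exp (-(1/2) * (m:ℝ) ^ (1-s)) := by
    have hev' : ∀ᶠ m : ℕ in atTop, |Real.log (m:ℝ)| ≤ 1 * |(m:ℝ) ^ (1-s)| :=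
      tendsto_natCast_atTop_atTop.eventually hev
    filter_upwards [hev', eventually_ge_atTop 3] with m hm hm3
    have hm1 : (1:ℝ) ≤ (m:ℝ) := by exact_mod_cast Nat.one_le_iff_ne_zero.mpr (by omega)
    have hlnn : (0:ℝ) ≤ Real.log m := Real.log_nonneg hm1
    have hrnn : (0:ℝ) ≤ (m:ℝ) ^ (1-s) := Real.rpow_nonneg (by linarith) _
    have hle : Real.log m ≤ (m:ℝ) ^ (1-s) := by
      calc Real.log m ≤ |Real.log (m:ℝ)| := le_abs_self _
        _ ≤ 1 * |(m:ℝ) ^ (1-s)| := hm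
        _ = (m:ℝ) ^ (1-s) := by rw [one_mul, abs_of_nonneg hrnn]
    have h1 : (Real.log m) ^ c ≤ ((m:ℝ) ^ (1-s)) ^ c :=
      Real.rpow_le_rpow hlnn hle hc
    have h2 : Real.exp (-(m:ℝ) ^ (1-s) / 2) = Real.exp (-(1/2) * (m:ℝ) ^ (1-s)) := by
      ring_nf
    rw [h2, mul_comm]
    exact mul_le_mul_of_nonneg_right h1 (Real.exp_pos _).le
  exact squeeze_zero' hnn hub hcomp

lemma aux_c_limit (t : ℝ) (ht : 1 < t) :
    Tendsto (fun m : ℕ => (((1:ℝ) + (m:ℝ) ^ (-t)) ^ (m+1))⁻¹) atTop (nhds 1) := by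
  have hpos : ∀ m : ℕ, (0:ℝ) < 1 + (m:ℝ) ^ (-t) := by
    intro m
    have : (0:ℝ) ≤ (m:ℝ) ^ (-t) := Real.rpow_nonneg (Nat.cast_nonneg m) _
    linarith
  have hrw : ∀ m : ℕ, (((1:ℝ) + (m:ℝ) ^ (-t)) ^ (m+1))⁻¹
      = Real.exp (-(((m:ℕ)+1 : ℝ) * Real.log (1 + (m:ℝ) ^ (-t)))) := by
    intro m
    calc (((1:ℝ) + (m:ℝ) ^ (-t)) ^ (m+1))⁻¹
        = ((Real.exp (Real.log (1 + (m:ℝ) ^ (-t)))) ^ (m+1))⁻¹ := by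
          rw [Real.exp_log (hpos m)]
      _ = (Real.exp (((m+1 : ℕ) : ℝ) * Real.log (1 + (m:ℝ) ^ (-t))))⁻¹ := by
          rw [Real.exp_nat_mul]
      _ = Real.exp (-(((m:ℕ)+1 : ℝ) * Real.log (1 + (m:ℝ) ^ (-t)))) := by
          rw [← Real.exp_neg]; push_cast; ring_nf
  have hg : Tendsto (fun m : ℕ => ((m:ℕ)+1 : ℝ) * Real.log (1 + (m:ℝ) ^ (-t)))
      atTop (nhds 0) := by
    have hub : Tendsto (fun m : ℕ => (m:ℝ) ^ (1-t) + 2 * (m:ℝ) ^ (-t)) atTop (nhds 0) := by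
      have h1 : Tendsto (fun m : ℕ => (m:ℝ) ^ (1-t)) atTop (nhds 0) := by
        have := (tendsto_rpow_neg_atTop (y := t-1) (by linarith)).comp
          tendsto_natCast_atTop_atTop
        simpa [Function.comp_def, neg_sub] using this
      have h2 : Tendsto (fun m : ℕ => 2 * (m:ℝ) ^ (-t)) atTop (nhds 0) := by
        have := (tendsto_rpow_neg_atTop (y := t) (by linarith)).comp
          tendsto_natCast_atTop_atTop
        simpa using (this.const_mul 2)
      simpa using h1.add h2
    apply squeeze_zero' ?_ ?_ hub
    · filter_upwards with m
      have h1 : (1:ℝ) ≤ 1 + (m:ℝ) ^ (-t) := by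
        have : (0:ℝ) ≤ (m:ℝ) ^ (-t) := Real.rpow_nonneg (Nat.cast_nonneg m) _
        linarith
      have := Real.log_nonneg h1
      positivity
    · filter_upwards [eventually_ge_atTop 1] with m hm
      have hm0 : (0:ℝ) < (m:ℝ) := by exact_mod_cast Nat.lt_of_lt_of_le Nat.zero_lt_one hm
      have hlog : Real.log (1 + (m:ℝ) ^ (-t)) ≤ (m:ℝ) ^ (-t) := by
        have := Real.log_le_sub_one_of_pos (hpos m)
        linarith
      have hnn : (0:ℝ) ≤ (m:ℝ) ^ (-t) := Real.rpow_nonneg (Nat.cast_nonneg m) _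
      have hlognn : (0:ℝ) ≤ Real.log (1 + (m:ℝ) ^ (-t)) := by
        apply Real.log_nonneg; linarith
      have hmul : ((m:ℕ)+1 : ℝ) * Real.log (1 + (m:ℝ) ^ (-t))
          ≤ ((m:ℕ)+1 : ℝ) * (m:ℝ) ^ (-t) := by
        apply mul_le_mul_of_nonneg_left hlog
        positivity
      have hpow : (m:ℝ) * (m:ℝ) ^ (-t) = (m:ℝ) ^ (1-t) := by
        rw [show (1:ℝ) - t = 1 + (-t) by ring,
          Real.rpow_one_add' (le_of_lt hm0) (by intro h; nlinarith)]
      have heq : ((m:ℕ)+1 : ℝ) * (m:ℝ) ^ (-t) ≤ (m:ℝ) ^ (1-t) + 2 * (m:ℝ) ^ (-t) := by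
        push_cast
        nlinarith
      linarith
  have h0 : Tendsto (fun m : ℕ => -(((m:ℕ)+1 : ℝ) * Real.log (1 + (m:ℝ) ^ (-t))))
      atTop (nhds 0) := by simpa using hg.neg
  have : Tendsto (fun m : ℕ => Real.exp (-(((m:ℕ)+1 : ℝ) * Real.log (1 + (m:ℝ) ^ (-t)))))
      atTop (nhds 1) := by
    have := (Real.continuous_exp.tendsto 0).comp h0
    simpa [Function.comp_def] using this
  exact this.congr (fun m => (hrw m).symm)

lemma aux_ratio (α η : ℝ) (hη : 0 < η) (L : ℝ → ℝ) (hLpos : ∀ x, 0 < L x)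
    (G : ℝ → ℝ) (hGeq : ∀ x > η, G x = x ^ (-α) * L x)
    (t : ℝ) (ht : 0 < t)
    (hsvt : Tendsto (fun x => L (t * x) / L x) atTop (nhds 1)) :
    Tendsto (fun m : ℕ => G (t * Real.log m) / G (Real.log m))
      atTop (nhds (t ^ (-α))) := by
  have hlog : Tendsto (fun m : ℕ => Real.log m) atTop atTop :=
    Real.tendsto_log_atTop.comp tendsto_natCast_atTop_atTop
  have hmain : Tendsto (fun m : ℕ => t ^ (-α) * (L (t * Real.log m) / L (Real.log m)))
      atTop (nhds (t ^ (-α))) := by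
    have := (hsvt.comp hlog).const_mul (t ^ (-α))
    simpa [Function.comp] using this
  apply hmain.congr'
  have hev : ∀ᶠ m : ℕ in atTop, max η (η / t) < Real.log m :=
    hlog.eventually (eventually_gt_atTop _)
  filter_upwards [hev] with m hm
  have hx : η < Real.log m := lt_of_le_of_lt (le_max_left _ _) hm
  have hx0 : (0:ℝ) < Real.log m := lt_trans hη hx
  have htx : η < t * Real.log m := by
    have h2 : η / t < Real.log m := lt_of_le_of_lt (le_max_right _ _) hm
    calc η = t * (η / t) := by field_simp
      _ < t * Real.log m := by exact mul_lt_mul_of_pos_left h2 ht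
  rw [hGeq _ htx, hGeq _ hx, Real.mul_rpow (le_of_lt ht) (le_of_lt hx0)]
  have h1 : (Real.log m : ℝ) ^ (-α) ≠ 0 := ne_of_gt (Real.rpow_pos_of_pos hx0 _)
  have h2 : L (Real.log m) ≠ 0 := ne_of_gt (hLpos _)
  field_simp

lemma aux_G_low (α η : ℝ) (hα : 1 < α) (hη : 0 < η) (L : ℝ → ℝ) (hLpos : ∀ x, 0 < L x)
    (h2 : Tendsto (fun x => L (2 * x) / L x) atTop (nhds 1))
    (G : ℝ → ℝ) (hGanti : Antitone G)
    (hGeq : ∀ x > η, G x = x ^ (-α) * L x) :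
    ∃ x0 C : ℝ, η < x0 ∧ 1 ≤ x0 ∧ 0 < C ∧ ∀ x ≥ x0, C * x ^ (-(α+1)) ≤ G x := by
  obtain ⟨x1, hx1⟩ := (h2.eventually (eventually_gt_nhds (by norm_num : (1:ℝ)/2 < 1))).exists_forall_of_atTop
  set x0 : ℝ := max x1 (max (η + 1) 1) with hx0def
  have hx0η : η < x0 := lt_of_lt_of_le (by linarith) (le_trans (le_max_left _ _) (le_max_right _ _))
  have hx01 : (1:ℝ) ≤ x0 := le_trans (le_max_right _ _) (le_max_right _ _)
  have hx00 : (0:ℝ) < x0 := lt_of_lt_of_le one_pos hx01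
  have hhalf : ∀ x ≥ x0, L x / 2 ≤ L (2 * x) := by
    intro x hx
    have h := hx1 x (le_trans (le_max_left _ _) hx)
    have hLx := hLpos x
    rw [lt_div_iff₀ hLx] at h
    linarith
  have hpow1 : ∀ n : ℕ, (1:ℝ) ≤ 2 ^ n := fun n => one_le_pow₀ (by norm_num)
  have hdy : ∀ n : ℕ, L x0 / 2 ^ n ≤ L (2 ^ n * x0) := by
    intro n
    induction n with
    | zero => simp
    | succ n ih =>
      have h2n : x0 ≤ 2 ^ n * x0 := le_mul_of_one_le_left (le_of_lt hx00) (hpow1 n)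
      have hh := hhalf (2 ^ n * x0) h2n
      have hstep : L (2 ^ n * x0) / 2 ≤ L (2 ^ (n+1) * x0) := by
        have : (2:ℝ) ^ (n+1) * x0 = 2 * (2 ^ n * x0) := by ring
        rw [this]
        exact hh
      have hA : L x0 / 2 ^ (n+1) = (L x0 / 2 ^ n) / 2 := by ring
      rw [hA]
      linarith
  refine ⟨x0, L x0 * x0 * 4 ^ (-(α+1)), hx0η, hx01,
    mul_pos (mul_pos (hLpos x0) hx00) (Real.rpow_pos_of_pos (by norm_num) _), ?_⟩
  intro x hx
  have hx0pos : (0:ℝ) < x := lt_of_lt_of_le hx00 hx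
  obtain ⟨n, hn1, hn2⟩ : ∃ n : ℕ, x ≤ 2 ^ n * x0 ∧ (2:ℝ) ^ n * x0 ≤ 4 * x := by
    set r : ℝ := x / x0 with hrdef
    have hr1 : (1:ℝ) ≤ r := (one_le_div hx00).mpr hx
    set k : ℕ := ⌈r⌉₊ with hkdef
    have hk1 : 1 ≤ k := Nat.one_le_iff_ne_zero.mpr (by
      intro h
      have := Nat.ceil_eq_zero.mp h
      linarith)
    have hrx : r * x0 = x := div_mul_cancel₀ x (ne_of_gt hx00)
    refine ⟨Nat.log 2 k + 1, ?_, ?_⟩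
    · have hk : r ≤ (k:ℝ) := Nat.le_ceil r
      have hklt : (k:ℝ) < (2:ℝ) ^ (Nat.log 2 k + 1) := by
        exact_mod_cast Nat.lt_pow_succ_log_self (by norm_num) k
      have hr2 : r ≤ (2:ℝ) ^ (Nat.log 2 k + 1) := le_of_lt (lt_of_le_of_lt hk hklt)
      calc x = r * x0 := hrx.symm
        _ ≤ 2 ^ (Nat.log 2 k + 1) * x0 := mul_le_mul_of_nonneg_right hr2 (le_of_lt hx00)
    · have hpow : (2:ℝ) ^ (Nat.log 2 k) ≤ (k:ℝ) := by
        exact_mod_cast Nat.pow_log_le_self 2 (by omega)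
      have hkr : (k:ℝ) ≤ r + 1 := by
        have := Nat.ceil_lt_add_one (le_trans zero_le_one hr1)
        linarith
      have h4r : (2:ℝ) ^ (Nat.log 2 k + 1) ≤ 4 * r := by
        rw [pow_succ]
        nlinarith
      calc (2:ℝ) ^ (Nat.log 2 k + 1) * x0 ≤ 4 * r * x0 :=
            mul_le_mul_of_nonneg_right h4r (le_of_lt hx00)
        _ = 4 * x := by rw [mul_assoc, hrx]
  set y : ℝ := 2 ^ n * x0 with hydef
  have hy0 : (0:ℝ) < y := by positivity
  have hyη : η < y := lt_of_lt_of_le hx0η (le_mul_of_one_le_left (le_of_lt hx00) (hpow1 n))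
  have hGxy : G y ≤ G x := hGanti hn1
  have hGy : G y = y ^ (-α) * L y := hGeq y hyη
  have hLy : L x0 / 2 ^ n ≤ L y := hdy n
  have hy4x : (4 * x) ^ (-α) ≤ y ^ (-α) :=
    Real.rpow_le_rpow_of_nonpos hy0 hn2 (by linarith)
  have hLlow : L x0 * x0 / (4 * x) ≤ L x0 / 2 ^ n := by
    rw [div_le_div_iff₀ (by linarith) (by positivity)]
    have : x0 * 2 ^ n ≤ 4 * x := by linarith [hn2]
    nlinarith [hLpos x0]
  have h4xnn : (0:ℝ) ≤ (4 * x) ^ (-α) := Real.rpow_nonneg (by linarith) _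
  have hLynn : (0:ℝ) ≤ L y := le_of_lt (hLpos y)
  have step : (4 * x) ^ (-α) * (L x0 * x0 / (4 * x)) ≤ G x := by
    calc (4 * x) ^ (-α) * (L x0 * x0 / (4 * x))
        ≤ (4 * x) ^ (-α) * L y := by
          apply mul_le_mul_of_nonneg_left _ h4xnn
          linarith
      _ ≤ y ^ (-α) * L y := mul_le_mul_of_nonneg_right hy4x hLynn
      _ = G y := hGy.symm
      _ ≤ G x := hGxy
  have key : (4 * x) ^ (-α) * (L x0 * x0 / (4 * x))
      = L x0 * x0 * 4 ^ (-(α+1)) * x ^ (-(α+1)) := by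
    rw [Real.mul_rpow (by norm_num) (le_of_lt hx0pos),
      show -(α+1) = -α + (-1) by ring,
      Real.rpow_add (by norm_num : (0:ℝ) < 4) (-α) (-1),
      Real.rpow_add hx0pos (-α) (-1),
      Real.rpow_neg_one, Real.rpow_neg_one]
    field_simp
  linarith [key ▸ step]

end AuxAnalytic

lemma aux_tail_eq {Ω : Type*} [MeasurableSpace Ω] (μ : Measure Ω) [IsProbabilityMeasure μ]
    (A : Ω → ℝ) (hA : Measurable A) (hA01 : ∀ ω, A ω ∈ Set.Ioo (0:ℝ) 1)
    (Z : Ω → ℕ) (hZ : Measurable Z)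
    (hcond : ∀ (k : ℕ) (s : Set ℝ), MeasurableSet s →
      μ {ω | Z ω = k ∧ A ω ∈ s}
        = ∫⁻ ω in A ⁻¹' s, ENNReal.ofReal (A ω * (1 - A ω) ^ k) ∂μ)
    (m : ℕ) :
    μ {ω | m < Z ω} = ∫⁻ ω, ENNReal.ofReal ((1 - A ω) ^ (m+1)) ∂μ := by
  have hμk : ∀ k : ℕ, μ {ω | Z ω = k} = ∫⁻ ω, ENNReal.ofReal (A ω * (1 - A ω) ^ k) ∂μ := by
    intro k
    have := hcond k Set.univ MeasurableSet.univ
    simpa using this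
  have hsetle : {ω | Z ω ≤ m} = ⋃ k ∈ Finset.range (m+1), {ω | Z ω = k} := by
    ext ω; simp [Nat.lt_succ_iff]
  have hle : μ {ω | Z ω ≤ m} = ∑ k ∈ Finset.range (m+1), μ {ω | Z ω = k} := by
    rw [hsetle]
    apply measure_biUnion_finset
    · intro i _ j _ hij
      simp only [Set.disjoint_left]
      rintro ω h1 h2
      exact hij (h1.symm.trans h2)
    · intro k _
      exact hZ (measurableSet_singleton k)
  have hmeasf : ∀ k : ℕ, Measurable fun ω => ENNReal.ofReal (A ω * (1 - A ω) ^ k) := by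
    intro k
    exact (hA.mul ((measurable_const.sub hA).pow_const k)).ennreal_ofReal
  have hsum : ∑ k ∈ Finset.range (m+1), μ {ω | Z ω = k}
      = ∫⁻ ω, ENNReal.ofReal (1 - (1 - A ω) ^ (m+1)) ∂μ := by
    calc ∑ k ∈ Finset.range (m+1), μ {ω | Z ω = k}
        = ∑ k ∈ Finset.range (m+1), ∫⁻ ω, ENNReal.ofReal (A ω * (1 - A ω) ^ k) ∂μ := by
          exact Finset.sum_congr rfl fun k _ => hμk k
      _ = ∫⁻ ω, ∑ k ∈ Finset.range (m+1), ENNReal.ofReal (A ω * (1 - A ω) ^ k) ∂μ :=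
          (lintegral_finset_sum _ fun k _ => hmeasf k).symm
      _ = ∫⁻ ω, ENNReal.ofReal (1 - (1 - A ω) ^ (m+1)) ∂μ := by
          congr 1; ext ω
          obtain ⟨h0, h1⟩ := hA01 ω
          rw [← ENNReal.ofReal_sum_of_nonneg]
          · congr 1
            have hA0 : A ω ≠ 0 := ne_of_gt h0
            rw [← Finset.mul_sum, geom_sum_eq (by intro h; nlinarith) (m+1),
              show (1 - A ω) - 1 = -(A ω) by ring, div_neg, mul_neg,
              mul_div_assoc', mul_comm, ← mul_div_assoc', div_self hA0]
            ring
          · intro k _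
            have : (0:ℝ) ≤ (1 - A ω) ^ k := pow_nonneg (by linarith) k
            positivity
  have hcompl : μ {ω | Z ω ≤ m} + μ {ω | m < Z ω} = 1 := by
    have hms : MeasurableSet {ω | Z ω ≤ m} := hZ measurableSet_Iic
    have hc : {ω | Z ω ≤ m}ᶜ = {ω | m < Z ω} := by
      ext ω; simp [not_le]
    rw [← hc, measure_add_measure_compl hms, measure_univ]
  have hint : (∫⁻ ω, ENNReal.ofReal (1 - (1 - A ω) ^ (m+1)) ∂μ)
      + ∫⁻ ω, ENNReal.ofReal ((1 - A ω) ^ (m+1)) ∂μ = 1 := by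
    rw [← lintegral_add_left (show Measurable fun ω => ENNReal.ofReal (1 - (1 - A ω) ^ (m+1)) from (measurable_const.sub ((measurable_const.sub hA).pow_const (m+1))).ennreal_ofReal)]
    have : ∀ ω, ENNReal.ofReal (1 - (1 - A ω) ^ (m+1)) + ENNReal.ofReal ((1 - A ω) ^ (m+1))
        = 1 := by
      intro ω
      obtain ⟨h0, h1⟩ := hA01 ω
      have hp0 : (0:ℝ) ≤ (1 - A ω) ^ (m+1) := pow_nonneg (by linarith) _
      have hp1 : (1 - A ω) ^ (m+1) ≤ 1 := pow_le_one₀ (by linarith) (by linarith)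
      rw [← ENNReal.ofReal_add (by linarith) hp0]
      norm_num
    simp only [this]
    simp [lintegral_const]
  have hfin : μ {ω | Z ω ≤ m} ≠ ⊤ := measure_ne_top μ _
  have : μ {ω | Z ω ≤ m} + μ {ω | m < Z ω}
      = μ {ω | Z ω ≤ m} + ∫⁻ ω, ENNReal.ofReal ((1 - A ω) ^ (m+1)) ∂μ := by
    rw [hcompl, hle, hsum]
    exact hint.symm
  exact (ENNReal.add_right_inj hfin).mp this

theorem tail_first_generation
    {Ω : Type*} [MeasurableSpace Ω] (μ : Measure Ω) [IsProbabilityMeasure μ]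
    (A : Ω → ℝ) (hA : Measurable A) (hA01 : ∀ ω, A ω ∈ Set.Ioo (0:ℝ) 1)
    (Z : Ω → ℕ) (hZ : Measurable Z)
    (α η : ℝ) (hα : 1 < α) (hη : 0 < η)
    (L : ℝ → ℝ) (hLpos : ∀ x, 0 < L x) (hLmeas : Measurable L)
    (hsv : ∀ t > (0:ℝ), Tendsto (fun x => L (t * x) / L x) atTop (nhds 1))
    (htail : ∀ x > η,
      (μ {ω | x < Real.log ((1 - A ω) / A ω)}).toReal = x ^ (-α) * L x)
    (hcond : ∀ (k : ℕ) (s : Set ℝ), MeasurableSet s →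
      μ {ω | Z ω = k ∧ A ω ∈ s}
        = ∫⁻ ω in A ⁻¹' s, ENNReal.ofReal (A ω * (1 - A ω) ^ k) ∂μ) :
    Tendsto
      (fun m : ℕ =>
        (μ {ω | m < Z ω}).toReal /
          ((Real.log m) ^ (-α) * L (Real.log m)))
      atTop (nhds 1) := by
  classical
  set G : ℝ → ℝ := fun x => (μ {ω | x < Real.log ((1 - A ω) / A ω)}).toReal with hGdef
  have hW : ∀ ω, 0 < (1 - A ω) / A ω := fun ω =>
    div_pos (by linarith [(hA01 ω).2]) (hA01 ω).1
  have hGanti : Antitone G := by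
    intro x y hxy
    exact ENNReal.toReal_mono (measure_ne_top μ _)
      (measure_mono (fun ω h => lt_of_le_of_lt hxy h))
  have hGeq : ∀ x > η, G x = x ^ (-α) * L x := htail
  have hF : ∀ m : ℕ, μ {ω | m < Z ω} = ∫⁻ ω, ENNReal.ofReal ((1 - A ω) ^ (m+1)) ∂μ :=
    aux_tail_eq μ A hA hA01 Z hZ hcond
  have hTmeas : Measurable fun ω => Real.log ((1 - A ω) / A ω) :=
    ((measurable_const.sub hA).div hA).log
  have hSet : ∀ c : ℝ, MeasurableSet {ω | c < Real.log ((1 - A ω) / A ω)} :=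
    fun c => measurableSet_lt measurable_const hTmeas
  have hfmeas : ∀ m : ℕ, Measurable fun ω => ENNReal.ofReal ((1 - A ω) ^ (m+1)) :=
    fun m => ((measurable_const.sub hA).pow_const (m+1)).ennreal_ofReal
  have hfle1 : ∀ m : ℕ, ∀ ω, ENNReal.ofReal ((1 - A ω) ^ (m+1)) ≤ 1 := by
    intro m ω
    obtain ⟨h0, h1⟩ := hA01 ω
    exact ENNReal.ofReal_le_one.mpr (pow_le_one₀ (by linarith) (by linarith))
  have hIntne : ∀ m : ℕ, (∫⁻ ω, ENNReal.ofReal ((1 - A ω) ^ (m+1)) ∂μ) ≠ ⊤ := by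
    intro m
    have : (∫⁻ ω, ENNReal.ofReal ((1 - A ω) ^ (m+1)) ∂μ) ≤ ∫⁻ _, 1 ∂μ :=
      lintegral_mono fun ω => hfle1 m ω
    simp only [lintegral_one, measure_univ, mul_one] at this
    exact ne_top_of_le_ne_top (by norm_num) this
  have hlog : Tendsto (fun m : ℕ => Real.log m) atTop atTop :=
    Real.tendsto_log_atTop.comp tendsto_natCast_atTop_atTop
  have hgpos : ∀ᶠ m : ℕ in atTop,
      0 < (Real.log m) ^ (-α) * L (Real.log m) ∧ η < Real.log m := by
    filter_upwards [hlog.eventually (eventually_gt_atTop (max η 0))] with m hm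
    have h1 : η < Real.log m := lt_of_le_of_lt (le_max_left _ _) hm
    have h2 : (0:ℝ) < Real.log m := lt_of_le_of_lt (le_max_right _ _) hm
    exact ⟨mul_pos (Real.rpow_pos_of_pos h2 _) (hLpos _), h1⟩
  -- lower estimate
  have hLower : ∀ t : ℝ, 0 < t → ∀ᶠ m : ℕ in atTop,
      (((1:ℝ) + (m:ℝ) ^ (-t)) ^ (m+1))⁻¹ * G (t * Real.log m)
        ≤ (μ {ω | m < Z ω}).toReal := by
    intro t ht
    filter_upwards [hlog.eventually (eventually_gt_atTop 0), eventually_ge_atTop 1]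
      with m hm hm1
    have hm0 : (0:ℝ) < (m:ℝ) := by exact_mod_cast hm1
    set c : ℝ := (((1:ℝ) + (m:ℝ) ^ (-t)) ^ (m+1))⁻¹ with hcdef
    have hbpos : (0:ℝ) < 1 + (m:ℝ) ^ (-t) := by
      have : (0:ℝ) ≤ (m:ℝ) ^ (-t) := Real.rpow_nonneg (le_of_lt hm0) _
      linarith
    have hc0 : 0 ≤ c := by positivity
    set S := {ω | t * Real.log m < Real.log ((1 - A ω) / A ω)} with hSdef
    have hpt : ∀ ω ∈ S, ENNReal.ofReal c ≤ ENNReal.ofReal ((1 - A ω) ^ (m+1)) := by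
      intro ω hω
      apply ENNReal.ofReal_le_ofReal
      obtain ⟨h0, h1⟩ := hA01 ω
      have hWgt : (m:ℝ) ^ t < (1 - A ω) / A ω := by
        have h := Real.exp_lt_exp.mpr hω
        rw [Real.exp_log (hW ω)] at h
        rw [Real.rpow_def_of_pos hm0, mul_comm]
        exact h
      have hbase := aux_low (A ω) ((m:ℝ) ^ t) h0 h1 (Real.rpow_pos_of_pos hm0 t) hWgt
      rw [← Real.rpow_neg (le_of_lt hm0)] at hbase
      calc c = ((1 + (m:ℝ) ^ (-t))⁻¹) ^ (m+1) := by rw [inv_pow]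
        _ ≤ (1 - A ω) ^ (m+1) := pow_le_pow_left₀ (by positivity) hbase _
    have h1 : ENNReal.ofReal c * μ S ≤ ∫⁻ ω, ENNReal.ofReal ((1 - A ω) ^ (m+1)) ∂μ := by
      calc ENNReal.ofReal c * μ S = ∫⁻ _ in S, ENNReal.ofReal c ∂μ :=
            (setLIntegral_const S _).symm
        _ ≤ ∫⁻ ω in S, ENNReal.ofReal ((1 - A ω) ^ (m+1)) ∂μ :=
            setLIntegral_mono (hfmeas m) hpt
        _ ≤ ∫⁻ ω, ENNReal.ofReal ((1 - A ω) ^ (m+1)) ∂μ :=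
            setLIntegral_le_lintegral _ _
    have h2 := ENNReal.toReal_mono (hIntne m) h1
    rw [ENNReal.toReal_mul, ENNReal.toReal_ofReal hc0] at h2
    rw [hF m]
    exact h2
  -- upper estimate
  have hUpper : ∀ s : ℝ, 0 < s → ∀ᶠ m : ℕ in atTop,
      (μ {ω | m < Z ω}).toReal
        ≤ G (s * Real.log m) + Real.exp (-(m:ℝ) ^ (1-s) / 2) := by
    intro s hs
    filter_upwards [hlog.eventually (eventually_gt_atTop 0), eventually_ge_atTop 1]
      with m hm hm1
    have hm0 : (0:ℝ) < (m:ℝ) := by exact_mod_cast hm1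
    have hm1' : (1:ℝ) ≤ (m:ℝ) := by exact_mod_cast hm1
    set S := {ω | s * Real.log m < Real.log ((1 - A ω) / A ω)} with hSdef
    set E : ℝ := Real.exp (-(m:ℝ) ^ (1-s) / 2) with hEdef
    have hE0 : 0 ≤ E := le_of_lt (Real.exp_pos _)
    have hms : (1:ℝ) ≤ (m:ℝ) ^ s := by
      simpa using Real.rpow_le_rpow_of_exponent_le hm1' (le_of_lt hs : (0:ℝ) ≤ s)
    have hpt : ∀ ω ∈ Sᶜ,
        ENNReal.ofReal ((1 - A ω) ^ (m+1)) ≤ ENNReal.ofReal E := by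
      intro ω hω
      obtain ⟨h0, h1⟩ := hA01 ω
      have hle : Real.log ((1 - A ω) / A ω) ≤ s * Real.log m := not_lt.mp hω
      have hWle : (1 - A ω) / A ω ≤ (m:ℝ) ^ s := by
        have h := Real.exp_le_exp.mpr hle
        rw [Real.exp_log (hW ω)] at h
        rw [Real.rpow_def_of_pos hm0, mul_comm]
        exact h
      have hb := aux_high (A ω) ((m:ℝ) ^ s) h0 h1 hms hWle
      apply ENNReal.ofReal_le_ofReal
      have hinvle : (2 * (m:ℝ) ^ s)⁻¹ ≤ 1/2 := by
        rw [inv_eq_one_div]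
        apply div_le_div_of_nonneg_left (by norm_num) (by norm_num)
        linarith
      have hnn2 : (0:ℝ) ≤ 1 - (2 * (m:ℝ) ^ s)⁻¹ := by linarith
      have hexpb : 1 - (2 * (m:ℝ) ^ s)⁻¹ ≤ Real.exp (-(2 * (m:ℝ) ^ s)⁻¹) := by
        have := Real.add_one_le_exp (-(2 * (m:ℝ) ^ s)⁻¹)
        linarith
      calc (1 - A ω) ^ (m+1) ≤ (1 - (2 * (m:ℝ) ^ s)⁻¹) ^ (m+1) :=
            pow_le_pow_left₀ (by linarith) hb _
        _ ≤ (Real.exp (-(2 * (m:ℝ) ^ s)⁻¹)) ^ (m+1) :=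
            pow_le_pow_left₀ hnn2 hexpb _
        _ = Real.exp (((m+1 : ℕ) : ℝ) * (-(2 * (m:ℝ) ^ s)⁻¹)) := by
            rw [Real.exp_nat_mul]
        _ ≤ E := by
            rw [hEdef]
            apply Real.exp_le_exp.mpr
            have hkey : (m:ℝ) ^ (1-s) * (m:ℝ) ^ s = (m:ℝ) := by
              rw [← Real.rpow_add hm0]
              norm_num
            have hpos2 : (0:ℝ) < (m:ℝ) ^ s := by positivity
            have hgoal : (m:ℝ) ^ (1-s) / 2 ≤ ((m:ℝ)+1) / (2 * (m:ℝ) ^ s) := by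
              rw [div_le_div_iff₀ (by norm_num) (by positivity)]
              nlinarith
            have heq1 : ((m+1:ℕ):ℝ) * -(2*(m:ℝ)^s)⁻¹ = -(((m:ℝ)+1)/(2*(m:ℝ)^s)) := by
              push_cast; ring
            rw [heq1, show -(m:ℝ)^(1-s)/2 = -((m:ℝ)^(1-s)/2) by ring, neg_le_neg_iff]
            exact hgoal
    have hsplit := (lintegral_add_compl (μ := μ)
      (fun ω => ENNReal.ofReal ((1 - A ω) ^ (m+1))) (hSet (s * Real.log m))).symm
    have hb1 : (∫⁻ ω in S, ENNReal.ofReal ((1 - A ω) ^ (m+1)) ∂μ) ≤ μ S := by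
      calc (∫⁻ ω in S, ENNReal.ofReal ((1 - A ω) ^ (m+1)) ∂μ)
          ≤ ∫⁻ _ in S, 1 ∂μ := setLIntegral_mono measurable_const (fun ω _ => hfle1 m ω)
        _ = μ S := by simp
    have hb2 : (∫⁻ ω in Sᶜ, ENNReal.ofReal ((1 - A ω) ^ (m+1)) ∂μ)
        ≤ ENNReal.ofReal E := by
      calc (∫⁻ ω in Sᶜ, ENNReal.ofReal ((1 - A ω) ^ (m+1)) ∂μ)
          ≤ ∫⁻ _ in Sᶜ, ENNReal.ofReal E ∂μ := setLIntegral_mono measurable_const hpt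
        _ = ENNReal.ofReal E * μ Sᶜ := setLIntegral_const _ _
        _ ≤ ENNReal.ofReal E * 1 := by
            exact mul_le_mul_right prob_le_one _
        _ = ENNReal.ofReal E := mul_one _
    have htot : (∫⁻ ω, ENNReal.ofReal ((1 - A ω) ^ (m+1)) ∂μ) ≤ μ S + ENNReal.ofReal E := by
      rw [hsplit]
      exact add_le_add hb1 hb2
    have h2 := ENNReal.toReal_mono
      (by
        apply ENNReal.add_ne_top.mpr
        exact ⟨measure_ne_top μ _, ENNReal.ofReal_ne_top⟩) htot
    rw [ENNReal.toReal_add (measure_ne_top μ _) ENNReal.ofReal_ne_top,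
      ENNReal.toReal_ofReal hE0] at h2
    rw [hF m]
    exact h2
  -- G lower bound
  obtain ⟨x0, C, hx0η, hx01, hC0, hGlow⟩ :=
    aux_G_low α η hα hη L hLpos (hsv 2 (by norm_num)) G hGanti hGeq
  rw [tendsto_order]
  constructor
  · -- lower part
    intro a ha
    set ca : ℝ := (max a 0 + 1) / 2 with hcadef
    have hca0 : 0 < ca := by
      have : (0:ℝ) ≤ max a 0 := le_max_right _ _
      rw [hcadef]; linarith
    have hca1 : ca < 1 := by
      have h1 : max a 0 < 1 := max_lt ha one_pos
      rw [hcadef]; linarith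
    have haca : a < ca := by
      have : a ≤ max a 0 := le_max_left _ _
      rw [hcadef]; linarith
    set t : ℝ := ca ^ (-1/α) with htdef
    have hαpos : (0:ℝ) < α := by linarith
    have ht1 : 1 < t := by
      rw [htdef]
      exact (Real.one_lt_rpow_iff_of_pos hca0).mpr (Or.inr ⟨hca1, by
        rw [neg_div]; exact neg_neg_of_pos (by positivity)⟩)
    have ht0 : 0 < t := lt_trans one_pos ht1
    have htα : t ^ (-α) = ca := by
      rw [htdef, ← Real.rpow_mul (le_of_lt hca0),
        show (-1/α) * (-α) = 1 by field_simp, Real.rpow_one]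
    have hratio := aux_ratio α η hη L hLpos G hGeq t ht0 (hsv t ht0)
    have hclim := aux_c_limit t ht1
    have hprod : Tendsto (fun m : ℕ =>
        (((1:ℝ) + (m:ℝ) ^ (-t)) ^ (m+1))⁻¹ * (G (t * Real.log m) / G (Real.log m)))
        atTop (nhds ca) := by
      have := hclim.mul hratio
      rw [one_mul, htα] at this
      exact this
    have hev2 := hprod.eventually (eventually_gt_nhds haca)
    filter_upwards [hLower t ht0, hev2, hgpos] with m hlow hgt ⟨hg0, hηm⟩
    have hGm : G (Real.log m) = (Real.log m) ^ (-α) * L (Real.log m) := hGeq _ hηm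
    have hGm0 : 0 < G (Real.log m) := by rw [hGm]; exact hg0
    calc a < (((1:ℝ) + (m:ℝ) ^ (-t)) ^ (m+1))⁻¹ * (G (t * Real.log m) / G (Real.log m)) := hgt
      _ = ((((1:ℝ) + (m:ℝ) ^ (-t)) ^ (m+1))⁻¹ * G (t * Real.log m)) / G (Real.log m) := by
          rw [mul_div_assoc]
      _ ≤ (μ {ω | m < Z ω}).toReal / G (Real.log m) := by
          exact div_le_div_of_nonneg_right hlow hGm0.le
      _ = (μ {ω | m < Z ω}).toReal / ((Real.log m) ^ (-α) * L (Real.log m)) := by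
          rw [hGm]
  · -- upper part
    intro b hb
    set cb : ℝ := (b + 1) / 2 with hcbdef
    have hcb1 : 1 < cb := by rw [hcbdef]; linarith
    have hcbb : cb < b := by rw [hcbdef]; linarith
    set s : ℝ := cb ^ (-1/α) with hsdef
    have hαpos : (0:ℝ) < α := by linarith
    have hcb0 : (0:ℝ) < cb := by linarith
    have hs0 : 0 < s := Real.rpow_pos_of_pos hcb0 _
    have hs1 : s < 1 := by
      rw [hsdef]
      apply Real.rpow_lt_one_of_one_lt_of_neg hcb1
      rw [neg_div]; exact neg_neg_of_pos (by positivity)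
    have hsα : s ^ (-α) = cb := by
      rw [hsdef, ← Real.rpow_mul (le_of_lt hcb0),
        show (-1/α) * (-α) = 1 by field_simp, Real.rpow_one]
    have hratio := aux_ratio α η hη L hLpos G hGeq s hs0 (hsv s hs0)
    rw [hsα] at hratio
    have hexplim : Tendsto (fun m : ℕ =>
        (1/C) * (Real.exp (-(m:ℝ) ^ (1-s) / 2) * (Real.log m) ^ (α+1)))
        atTop (nhds 0) := by
      have := (aux_exp_limit s (α+1) hs0 hs1 (by linarith)).const_mul (1/C)
      simpa using this
    have hsum : Tendsto (fun m : ℕ =>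
        G (s * Real.log m) / G (Real.log m)
          + (1/C) * (Real.exp (-(m:ℝ) ^ (1-s) / 2) * (Real.log m) ^ (α+1)))
        atTop (nhds cb) := by
      have := hratio.add hexplim
      simpa using this
    have hev2 := hsum.eventually (eventually_lt_nhds hcbb)
    filter_upwards [hUpper s hs0, hev2, hgpos,
      hlog.eventually (eventually_ge_atTop x0)] with m hup hlt ⟨hg0, hηm⟩ hx0m
    have hGm : G (Real.log m) = (Real.log m) ^ (-α) * L (Real.log m) := hGeq _ hηm
    have hGm0 : 0 < G (Real.log m) := by rw [hGm]; exact hg0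
    have hlm0 : (0:ℝ) < Real.log m := lt_trans hη hηm
    have hGlowm : C * (Real.log m) ^ (-(α+1)) ≤ G (Real.log m) := hGlow _ hx0m
    have hClm0 : (0:ℝ) < C * (Real.log m) ^ (-(α+1)) :=
      mul_pos hC0 (Real.rpow_pos_of_pos hlm0 _)
    set E : ℝ := Real.exp (-(m:ℝ) ^ (1-s) / 2) with hEdef
    have hE0 : (0:ℝ) ≤ E := le_of_lt (Real.exp_pos _)
    have hEdiv : E / G (Real.log m) ≤ (1/C) * (E * (Real.log m) ^ (α+1)) := by
      calc E / G (Real.log m) ≤ E / (C * (Real.log m) ^ (-(α+1))) :=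
            div_le_div_of_nonneg_left hE0 hClm0 hGlowm
        _ = (1/C) * (E * (Real.log m) ^ (α+1)) := by
            rw [show -(α+1) = -(α+1) by rfl, Real.rpow_neg (le_of_lt hlm0)]
            field_simp
    calc (μ {ω | m < Z ω}).toReal / ((Real.log m) ^ (-α) * L (Real.log m))
        = (μ {ω | m < Z ω}).toReal / G (Real.log m) := by rw [hGm]
      _ ≤ (G (s * Real.log m) + E) / G (Real.log m) := by
          exact div_le_div_of_nonneg_right hup hGm0.le
      _ = G (s * Real.log m) / G (Real.log m) + E / G (Real.log m) := add_div _ _ _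
      _ ≤ G (s * Real.log m) / G (Real.log m) + (1/C) * (E * (Real.log m) ^ (α+1)) := by
          linarith [hEdiv]
      _ < b := hlt
end

section
/- Let μ be a finite measure on (0, c] for some c > 0 whose tail U(u) := μ((0, u]) satisfies U(u) ~ (-log u)^{-α} L(-log u) as u → 0+, where α > 0 and L is slowly varying at infinity. Then the Laplace transform satisfies ∫_{(0,c]} e^{-mu} dμ(u) ~ (log m)^{-α} L(log m) as m → ∞. -/
open MeasureTheory Filter Set


/-- Core measure-theoretic step of Karamata's uniform convergence theorem:
if `h` is measurable and `h (y + a) - h y → 0` for every fixed `a`, then along any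
sequence `Y k → ∞` with bounded perturbations `U k`, `h (Y k + U k) - h (Y k) → 0`. -/
lemma uct_seq (h : ℝ → ℝ) (hm : Measurable h)
    (hslow : ∀ a : ℝ, Tendsto (fun y => h (y + a) - h y) atTop (nhds 0))
    (Y U : ℕ → ℝ) (hY : Tendsto Y atTop atTop)
    (M : ℝ) (hM : 0 ≤ M) (hUb : ∀ᶠ k in atTop, |U k| ≤ M) :
    Tendsto (fun k => h (Y k + U k) - h (Y k)) atTop (nhds 0) := by
  have hYU : Tendsto (fun k => Y k + U k) atTop atTop := by
    apply tendsto_atTop_mono' _ _ (hY.atTop_add tendsto_const_nhds (C := -M))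
    filter_upwards [hUb] with k hk
    have := abs_le.1 hk
    linarith [this.1]
  rw [NormedAddCommGroup.tendsto_nhds_zero]
  intro ε hε
  set ε' : ℝ := ε / 3 with hε'
  have hε'pos : 0 < ε' := by positivity
  -- bad sets
  set J : Set ℝ := Icc M (M + 1) with hJ
  set V : ℕ → Set ℝ := fun k => {s ∈ J | ε' ≤ |h (Y k + s) - h (Y k)|} with hV
  set W : ℕ → Set ℝ := fun k =>
    {r ∈ Icc (-(2 * M + 1)) (2 * M + 1) | ε' ≤ |h (Y k + U k + r) - h (Y k + U k)|} with hW
  have hVmeas : ∀ k, MeasurableSet (V k) := by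
    intro k
    apply measurableSet_Icc.inter
    exact measurableSet_le measurable_const
      ((hm.comp (measurable_const.add measurable_id)).sub measurable_const).abs
  have hWmeas : ∀ k, MeasurableSet (W k) := by
    intro k
    apply measurableSet_Icc.inter
    exact measurableSet_le measurable_const
      ((hm.comp (measurable_const.add measurable_id)).sub measurable_const).abs
  -- volumes go to zero
  have key : ∀ (S : ℕ → Set ℝ) (B : ℝ) (hB : 0 ≤ B), (∀ k, MeasurableSet (S k)) →
      (∀ k, S k ⊆ Icc (-B) B) →
      (∀ s, ∀ᶠ k in atTop, s ∉ S k) →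
      Tendsto (fun k => volume (S k)) atTop (nhds 0) := by
    intro S B hB hSm hSsub hSpt
    have : Tendsto (fun k => ∫⁻ s, (S k).indicator (fun _ => (1:ENNReal)) s) atTop
        (nhds (∫⁻ _ : ℝ, (0:ENNReal) ∂(volume))) := by
      apply tendsto_lintegral_of_dominated_convergence
        (bound := (Icc (-B) B).indicator (fun _ => (1:ENNReal)))
      · exact fun k => measurable_const.indicator (hSm k)
      · intro k
        filter_upwards with s
        by_cases hs : s ∈ S k
        · rw [Set.indicator_of_mem hs, Set.indicator_of_mem (hSsub k hs)]
        · simp [Set.indicator_of_notMem hs]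
      · rw [lintegral_indicator measurableSet_Icc _]
        simp [Real.volume_Icc]
      · filter_upwards with s
        have := hSpt s
        apply Tendsto.congr' _ tendsto_const_nhds
        filter_upwards [this] with k hk
        simp [Set.indicator_of_notMem hk]
    simp only [lintegral_zero] at this
    apply this.congr
    intro k
    rw [lintegral_indicator (hSm k) _]
    simp
  have hVvol : Tendsto (fun k => volume (V k)) atTop (nhds 0) := by
    apply key V (M + 1) (by linarith) hVmeas
    · intro k s hs
      have h1 : s ∈ J := hs.1
      exact ⟨le_trans (by linarith [h1.1] : -(M+1) ≤ M) h1.1, h1.2⟩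
    · intro s
      have := (hslow s).comp hY
      rw [NormedAddCommGroup.tendsto_nhds_zero] at this
      filter_upwards [this ε' hε'pos] with k hk
      intro hmem
      exact absurd hmem.2 (not_le.2 (by simpa using hk))
  have hWvol : Tendsto (fun k => volume (W k)) atTop (nhds 0) := by
    apply key W (2 * M + 1) (by linarith) hWmeas
    · intro k r hr; exact hr.1
    · intro r
      have := (hslow r).comp hYU
      rw [NormedAddCommGroup.tendsto_nhds_zero] at this
      filter_upwards [this ε' hε'pos] with k hk
      intro hmem
      exact absurd hmem.2 (not_le.2 (by simpa using hk))
  have hhalf : (0:ENNReal) < 1/2 := by norm_num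
  filter_upwards [hVvol.eventually_lt_const hhalf, hWvol.eventually_lt_const hhalf, hUb]
    with k hVk hWk hUk
  -- find a good shift s
  have hcov : ¬ (J ⊆ V k ∪ ((fun s => s + (- U k)) ⁻¹' W k)) := by
    intro hsub
    have h1 : volume J ≤ volume (V k) + volume (W k) := by
      calc volume J ≤ volume (V k ∪ ((fun s => s + (- U k)) ⁻¹' W k)) := measure_mono hsub
        _ ≤ volume (V k) + volume ((fun s => s + (- U k)) ⁻¹' W k) := measure_union_le _ _
        _ = volume (V k) + volume (W k) := by rw [measure_preimage_add_right]
    have h2 : volume J = 1 := by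
      rw [hJ, Real.volume_Icc]; norm_num
    rw [h2] at h1
    have : (1:ENNReal) < 1 := lt_of_le_of_lt h1 (by
      calc volume (V k) + volume (W k) < 1/2 + 1/2 := by
            exact ENNReal.add_lt_add hVk hWk
        _ = 1 := ENNReal.add_halves 1)
    exact lt_irrefl _ this
  rw [Set.not_subset] at hcov
  obtain ⟨s, hsJ, hsbad⟩ := hcov
  rw [Set.mem_union, not_or, Set.mem_preimage] at hsbad
  obtain ⟨hsV, hsW⟩ := hsbad
  -- deduce the bounds
  have habs1 : |h (Y k + s) - h (Y k)| < ε' := by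
    by_contra hcon
    exact hsV ⟨hsJ, le_of_not_gt hcon⟩
  have habs2 : |h (Y k + U k + (s + - U k)) - h (Y k + U k)| < ε' := by
    by_contra hcon
    apply hsW
    refine ⟨?_, le_of_not_gt hcon⟩
    have := abs_le.1 hUk
    constructor
    · have := hsJ.1; linarith [this]
    · have := hsJ.2; linarith
  have heq : Y k + U k + (s + - U k) = Y k + s := by ring
  rw [heq] at habs2
  have h2' : |h (Y k + U k) - h (Y k + s)| < ε' := by
    rw [abs_sub_comm]; exact habs2
  calc ‖h (Y k + U k) - h (Y k)‖ = |h (Y k + U k) - h (Y k)| := rfl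
    _ ≤ |h (Y k + U k) - h (Y k + s)| + |h (Y k + s) - h (Y k)| :=
        abs_sub_le _ _ _
    _ < ε' + ε' := add_lt_add h2' habs1
    _ < ε := by rw [hε']; linarith


lemma uct (h : ℝ → ℝ) (hm : Measurable h)
    (hslow : ∀ a : ℝ, Tendsto (fun y => h (y + a) - h y) atTop (nhds 0))
    (y u : ℝ → ℝ) (hy : Tendsto y atTop atTop)
    (M : ℝ) (hM : 0 ≤ M) (hub : ∀ᶠ x in atTop, |u x| ≤ M) :
    Tendsto (fun x => h (y x + u x) - h (y x)) atTop (nhds 0) := by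
  rw [Filter.tendsto_iff_seq_tendsto]
  intro x hx
  exact uct_seq h hm hslow (y ∘ x) (u ∘ x) (hy.comp hx) M hM (hx.eventually hub)

section SV
variable (L : ℝ → ℝ) (hLpos : ∀ x, 0 < L x) (hLmeas : Measurable L)
  (hsv : ∀ t > (0:ℝ), Tendsto (fun x => L (t * x) / L x) atTop (nhds 1))

/-- `h1 y = log L (exp y)` -/
noncomputable def h1 : ℝ → ℝ := fun y => Real.log (L (Real.exp y))

include hLmeas in
lemma h1_meas : Measurable (h1 L) :=
  Real.measurable_log.comp (hLmeas.comp Real.measurable_exp)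

include hLpos hsv in
lemma h1_slow : ∀ a : ℝ, Tendsto (fun y => h1 L (y + a) - h1 L y) atTop (nhds 0) := by
  intro a
  have h2 : Tendsto (fun x : ℝ => Real.log (L (Real.exp a * x) / L x)) atTop (nhds 0) := by
    have := (hsv (Real.exp a) (Real.exp_pos a))
    have hcont : Tendsto Real.log (nhds 1) (nhds 0) := by
      simpa using (Real.continuousAt_log one_ne_zero).tendsto
    exact hcont.comp this
  have := h2.comp Real.tendsto_exp_atTop
  apply this.congr
  intro yv
  simp only [Function.comp_apply, h1]
  rw [Real.log_div (ne_of_gt (hLpos _)) (ne_of_gt (hLpos _)), Real.exp_add, mul_comm]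

include hLpos hLmeas hsv in
/-- ratio version of the uniform convergence theorem. -/
lemma sv_ratio (p q : ℝ → ℝ) (hq : Tendsto q atTop atTop)
    (hp : ∀ᶠ x in atTop, 0 < p x)
    (hr : Tendsto (fun x => p x / q x) atTop (nhds 1)) :
    Tendsto (fun x => L (p x) / L (q x)) atTop (nhds 1) := by
  have hq0 : ∀ᶠ x in atTop, 0 < q x := hq.eventually (eventually_gt_atTop 0)
  have hu : Tendsto (fun x => Real.log (p x) - Real.log (q x)) atTop (nhds 0) := by
    have hcont : Tendsto Real.log (nhds 1) (nhds 0) := by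
      simpa using (Real.continuousAt_log one_ne_zero).tendsto
    have := hcont.comp hr
    apply this.congr'
    filter_upwards [hp, hq0] with x hpx hqx
    simp only [Function.comp_apply]
    rw [Real.log_div (ne_of_gt hpx) (ne_of_gt hqx)]
  have hub : ∀ᶠ x in atTop, |Real.log (p x) - Real.log (q x)| ≤ 1 := by
    have := hu.eventually (Metric.ball_mem_nhds (0:ℝ) one_pos)
    filter_upwards [this] with x hx
    rw [Real.dist_eq, sub_zero] at hx
    exact le_of_lt hx
  have hbase : Tendsto (fun x => Real.log (q x)) atTop atTop :=
    Real.tendsto_log_atTop.comp hq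
  have key := uct (h1 L) (h1_meas L hLmeas) (h1_slow L hLpos hsv)
    (fun x => Real.log (q x)) (fun x => Real.log (p x) - Real.log (q x))
    hbase 1 one_pos.le hub
  have := (Real.continuous_exp.tendsto 0).comp key
  rw [Real.exp_zero] at this
  apply this.congr'
  filter_upwards [hp, hq0] with x hpx hqx
  simp only [Function.comp_apply, h1]
  rw [show Real.log (q x) + (Real.log (p x) - Real.log (q x)) = Real.log (p x) by ring,
    Real.exp_log hpx, Real.exp_log hqx, Real.exp_sub, Real.exp_log (hLpos _),
    Real.exp_log (hLpos _)]

include hLpos hLmeas hsv in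
/-- A slowly varying function satisfies `log L x / x → 0`. -/
lemma sv_log_div : Tendsto (fun x => Real.log (L x) / x) atTop (nhds 0) := by
  -- integer Cesàro step
  have hd : Tendsto (fun n : ℕ => h1 L ((n:ℝ) + 1) - h1 L (n:ℝ)) atTop (nhds 0) :=
    (h1_slow L hLpos hsv 1).comp tendsto_natCast_atTop_atTop
  have hces := hd.cesaro
  have hnat : Tendsto (fun n : ℕ => h1 L (n:ℝ) / (n:ℝ)) atTop (nhds 0) := by
    have hsum : ∀ n : ℕ, ∑ i ∈ Finset.range n, (h1 L ((i:ℝ) + 1) - h1 L (i:ℝ))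
        = h1 L (n:ℝ) - h1 L 0 := by
      intro n
      have := Finset.sum_range_sub (fun i : ℕ => h1 L (i:ℝ)) n
      simpa [Nat.cast_add, Nat.cast_one] using this
    have h2 : Tendsto (fun n : ℕ => (n:ℝ)⁻¹ * (h1 L (n:ℝ) - h1 L 0)) atTop (nhds 0) := by
      apply hces.congr; intro n; rw [hsum n]
    have h3 := h2.add (tendsto_const_div_atTop_nhds_zero_nat (h1 L 0))
    rw [add_zero] at h3
    apply h3.congr'
    filter_upwards [eventually_gt_atTop 0] with n hn
    have hn0 : (n:ℝ) ≠ 0 := (Nat.cast_pos.2 hn).ne'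
    field_simp
    ring
  -- floor step
  have hfl : Tendsto (fun y : ℝ => h1 L y - h1 L (⌊y⌋ : ℝ)) atTop (nhds 0) := by
    have hbase : Tendsto (fun y : ℝ => ((⌊y⌋ : ℤ) : ℝ)) atTop atTop := by
      apply tendsto_atTop_mono (fun y => (Int.sub_one_lt_floor y).le)
      exact tendsto_atTop_add_const_right _ (-1) tendsto_id |>.congr (fun y => by simp only [id_eq]; ring)
    have hub : ∀ᶠ y : ℝ in atTop, |Int.fract y| ≤ 1 := by
      filter_upwards with y
      rw [abs_of_nonneg (Int.fract_nonneg y)]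
      exact (Int.fract_lt_one y).le
    have := uct (h1 L) (h1_meas L hLmeas) (h1_slow L hLpos hsv)
      (fun y => ((⌊y⌋ : ℤ) : ℝ)) Int.fract hbase 1 one_pos.le hub
    apply this.congr
    intro y
    rw [Int.floor_add_fract]
  -- combine: h1 y / exp y → 0
  have hfloor_div : Tendsto (fun y : ℝ => h1 L (⌊y⌋ : ℝ) / y) atTop (nhds 0) := by
    have hnn : Tendsto (fun y : ℝ => ⌊y⌋.toNat) atTop atTop := by
      apply tendsto_atTop_atTop.2
      intro b
      exact ⟨(b : ℝ) + 1, fun y hy => by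
        have hb1 : (b : ℤ) ≤ ⌊y⌋ := by
          rw [Int.le_floor]; push_cast; linarith
        omega⟩
    have hcomp := hnat.comp hnn
    apply squeeze_zero_norm' _ (by simpa using hcomp.norm)
    filter_upwards [eventually_ge_atTop (1:ℝ)] with y hy
    have hfl1 : (1:ℤ) ≤ ⌊y⌋ := by rwa [Int.le_floor, Int.cast_one]
    have hcast : ((⌊y⌋.toNat : ℕ) : ℝ) = ((⌊y⌋ : ℤ) : ℝ) := by
      exact_mod_cast Int.toNat_of_nonneg (by linarith : (0:ℤ) ≤ ⌊y⌋)
    have hpos : (0:ℝ) < ((⌊y⌋ : ℤ) : ℝ) := by exact_mod_cast hfl1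
    have hle : ((⌊y⌋ : ℤ) : ℝ) ≤ y := Int.floor_le y
    simp only [Function.comp_apply, norm_div, Real.norm_eq_abs, hcast]
    rw [abs_of_pos (by linarith : (0:ℝ) < y)]
    apply div_le_div_of_nonneg_left (abs_nonneg _) hpos hle
  have hyexp : Tendsto (fun y : ℝ => y / Real.exp y) atTop (nhds 0) := by
    have := (Real.tendsto_pow_log_div_mul_add_atTop 1 0 1 one_ne_zero).comp
      Real.tendsto_exp_atTop
    apply this.congr
    intro y
    simp [Real.log_exp]
  have hexp0 : Tendsto (fun y : ℝ => (Real.exp y)⁻¹) atTop (nhds 0) :=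
    Real.tendsto_exp_atTop.inv_tendsto_atTop
  have hA : Tendsto (fun y : ℝ => h1 L y / Real.exp y) atTop (nhds 0) := by
    have h2 := (hfl.mul hexp0).add (hfloor_div.mul hyexp)
    simp only [zero_mul, add_zero] at h2
    apply h2.congr'
    filter_upwards [eventually_ge_atTop (1:ℝ)] with y hy
    have hy0 : y ≠ 0 := by linarith
    have he0 : Real.exp y ≠ 0 := (Real.exp_pos y).ne'
    field_simp
    ring
  have := hA.comp Real.tendsto_log_atTop
  apply this.congr'
  filter_upwards [eventually_gt_atTop (0:ℝ)] with x hx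
  simp only [Function.comp_apply, h1, Real.exp_log hx]

end SV


theorem tauberian_slowly_varying
    (μ : Measure ℝ) [IsFiniteMeasure μ]
    (c : ℝ) (hc : 0 < c) (hsupp : μ (Set.Ioc 0 c)ᶜ = 0)
    (α : ℝ) (hα : 0 < α)
    (L : ℝ → ℝ) (hLpos : ∀ x, 0 < L x) (hLmeas : Measurable L)
    (hsv : ∀ t > (0:ℝ), Tendsto (fun x => L (t * x) / L x) atTop (nhds 1))
    (hU : Tendsto
      (fun u : ℝ =>
        (μ (Set.Ioc 0 u)).toReal /
          ((-Real.log u) ^ (-α) * L (-Real.log u)))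
      (nhdsWithin 0 (Set.Ioi 0)) (nhds 1)) :
    Tendsto
      (fun m : ℝ =>
        (∫⁻ u in Set.Ioc 0 c, ENNReal.ofReal (Real.exp (-(m * u))) ∂μ).toReal /
          ((Real.log m) ^ (-α) * L (Real.log m)))
      atTop (nhds 1) := by
  have hlog := Real.tendsto_log_atTop
  set g : ℝ → ℝ := fun m => Real.log m ^ (-α) * L (Real.log m) with hgdef
  set F : ℝ → ℝ := fun m =>
    (∫⁻ u in Set.Ioc 0 c, ENNReal.ofReal (Real.exp (-(m * u))) ∂μ).toReal with hFdef
  show Tendsto (fun m => F m / g m) atTop (nhds 1)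
  have hlogpos : ∀ᶠ m : ℝ in atTop, 0 < Real.log m := by
    filter_upwards [eventually_gt_atTop 1] with m hm
    exact Real.log_pos hm
  have hgpos : ∀ᶠ m : ℝ in atTop, 0 < g m := by
    filter_upwards [hlogpos] with m hm
    exact mul_pos (Real.rpow_pos_of_pos hm _) (hLpos _)
  have hloglog : Tendsto (fun x : ℝ => Real.log x / x) atTop (nhds 0) := by
    have := (Real.tendsto_pow_log_div_mul_add_atTop 1 0 1 one_ne_zero)
    apply this.congr
    intro x
    simp
  -- key intermediate : measure of small intervals compared to g
  have keyE : ∀ s : ℝ → ℝ, (∀ᶠ m in atTop, 0 < s m) →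
      Tendsto (fun m => -Real.log (s m) / Real.log m) atTop (nhds 1) →
      Tendsto (fun m => (μ (Set.Ioc 0 (s m))).toReal / g m) atTop (nhds 1) := by
    intro s hspos hratio
    have hb : Tendsto (fun m => -Real.log (s m)) atTop atTop := by
      have h2 := hratio.pos_mul_atTop one_pos hlog
      apply h2.congr'
      filter_upwards [hlogpos] with m hm
      rw [div_mul_cancel₀ _ hm.ne']
    have hbpos : ∀ᶠ m in atTop, 0 < -Real.log (s m) := hb.eventually (eventually_gt_atTop 0)
    have hs0 : Tendsto s atTop (nhdsWithin 0 (Set.Ioi 0)) := by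
      rw [tendsto_nhdsWithin_iff]
      refine ⟨?_, hspos⟩
      have h2 : Tendsto (fun m => Real.log (s m)) atTop atBot := by
        rwa [← tendsto_neg_atTop_iff]
      have h3 := Real.tendsto_exp_atBot.comp h2
      apply h3.congr'
      filter_upwards [hspos] with m hm
      simp only [Function.comp_apply]
      rw [Real.exp_log hm]
    have hfac1 := hU.comp hs0
    have hr1 : Tendsto (fun m => (-Real.log (s m)) ^ (-α) / Real.log m ^ (-α))
        atTop (nhds 1) := by
      have hcont : Tendsto (fun r : ℝ => r ^ (-α)) (nhds 1) (nhds 1) := by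
        have := (Real.continuousAt_rpow_const 1 (-α) (Or.inl one_ne_zero)).tendsto
        simpa [Real.one_rpow] using this
      have h2 := hcont.comp hratio
      apply h2.congr'
      filter_upwards [hbpos, hlogpos] with m hm hlm
      simp only [Function.comp_apply]
      rw [Real.div_rpow hm.le hlm.le]
    have hr2 : Tendsto (fun m => L (-Real.log (s m)) / L (Real.log m)) atTop (nhds 1) :=
      sv_ratio L hLpos hLmeas hsv _ _ hlog hbpos hratio
    have hfac2 : Tendsto
        (fun m => ((-Real.log (s m)) ^ (-α) * L (-Real.log (s m))) / g m) atTop (nhds 1) := by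
      have h2 := hr1.mul hr2
      rw [one_mul] at h2
      apply h2.congr
      intro m
      rw [div_mul_div_comm]
    have h2 := hfac1.mul hfac2
    rw [one_mul] at h2
    apply h2.congr'
    filter_upwards [hbpos] with m hm
    have hG : (-Real.log (s m)) ^ (-α) * L (-Real.log (s m)) ≠ 0 :=
      (mul_pos (Real.rpow_pos_of_pos hm _) (hLpos _)).ne'
    simp only [Function.comp_apply]
    rw [div_mul_div_cancel₀ hG]
  -- upper bound and lower bound on F
  have hFfin : ∀ᶠ m : ℝ in atTop, (∫⁻ u in Set.Ioc 0 c,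
      ENNReal.ofReal (Real.exp (-(m * u))) ∂μ) ≠ ⊤ := by
    filter_upwards [eventually_gt_atTop 0] with m hm
    have hle : (∫⁻ u in Set.Ioc 0 c, ENNReal.ofReal (Real.exp (-(m * u))) ∂μ)
        ≤ μ (Set.Ioc 0 c) := by
      calc (∫⁻ u in Set.Ioc 0 c, ENNReal.ofReal (Real.exp (-(m * u))) ∂μ)
          ≤ ∫⁻ _ in Set.Ioc 0 c, 1 ∂μ := by
            apply setLIntegral_mono' measurableSet_Ioc
            intro u hu
            rw [show (1:ENNReal) = ENNReal.ofReal 1 by simp]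
            apply ENNReal.ofReal_le_ofReal
            rw [Real.exp_le_one_iff]
            have := hu.1
            nlinarith
        _ = μ (Set.Ioc 0 c) := setLIntegral_one _
    exact ne_top_of_le_ne_top (measure_ne_top μ _) hle
  refine tendsto_order.2 ⟨?_, ?_⟩
  · -- lower bound
    intro a ha
    set r : ℝ := (max a 0 + 1) / 2 with hrdef
    have hr0 : 0 < r := by positivity
    have hr1 : r < 1 := by
      have : max a 0 < 1 := max_lt ha one_pos
      rw [hrdef]; linarith
    have har : a < r := by
      have : a ≤ max a 0 := le_max_left a 0
      rw [hrdef]; linarith [le_max_left a 0]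
    set e : ℝ := Real.exp (Real.log r / 2) with hedef
    have hepos : 0 < e := Real.exp_pos _
    have hee : e * e = r := by
      rw [hedef, ← Real.exp_add]
      rw [show Real.log r / 2 + Real.log r / 2 = Real.log r by ring, Real.exp_log hr0]
    have he1 : e < 1 := by
      rw [hedef, Real.exp_lt_one_iff]
      have := Real.log_neg hr0 hr1
      linarith
    set δ : ℝ := -(Real.log r) / 2 with hδdef
    have hδpos : 0 < δ := by
      rw [hδdef]
      have := Real.log_neg hr0 hr1
      linarith
    have heδ : Real.exp (-δ) = e := by rw [hδdef, hedef]; congr 1; ring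
    have hE := keyE (fun m => δ / m) (by
        filter_upwards [eventually_gt_atTop 0] with m hm
        positivity) (by
      have h2 : Tendsto (fun m : ℝ => 1 - Real.log δ / Real.log m) atTop (nhds 1) := by
        have := (tendsto_const_nhds (x := Real.log δ)).div_atTop hlog
        have h3 := (tendsto_const_nhds (x := (1:ℝ))).sub this
        rwa [sub_zero] at h3
      apply h2.congr'
      filter_upwards [eventually_gt_atTop 0, hlogpos] with m hm hlm
      rw [Real.log_div hδpos.ne' hm.ne']
      field_simp
      ring)
    have hlow : ∀ᶠ m : ℝ in atTop,
        e * ((μ (Set.Ioc 0 (δ / m))).toReal / g m) ≤ F m / g m := by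
      have hδc : ∀ᶠ m : ℝ in atTop, δ / m ≤ c := by
        have h2 : Tendsto (fun m : ℝ => δ / m) atTop (nhds 0) :=
          tendsto_const_nhds.div_atTop tendsto_id
        exact h2.eventually_le_const hc
      filter_upwards [eventually_gt_atTop 0, hδc, hgpos, hFfin] with m hm hδm hgm hfin
      have hFlow : Real.exp (-δ) * (μ (Set.Ioc 0 (δ / m))).toReal ≤ F m := by
        have hsub : Set.Ioc 0 (δ / m) ⊆ Set.Ioc 0 c :=
          Set.Ioc_subset_Ioc le_rfl hδm
        have h1 : (∫⁻ u in Set.Ioc 0 (δ / m), ENNReal.ofReal (Real.exp (-(m * u))) ∂μ)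
            ≤ ∫⁻ u in Set.Ioc 0 c, ENNReal.ofReal (Real.exp (-(m * u))) ∂μ :=
          lintegral_mono_set hsub
        have h2 : ENNReal.ofReal (Real.exp (-δ)) * μ (Set.Ioc 0 (δ / m))
            ≤ ∫⁻ u in Set.Ioc 0 (δ / m), ENNReal.ofReal (Real.exp (-(m * u))) ∂μ := by
          rw [← setLIntegral_const]
          apply setLIntegral_mono' measurableSet_Ioc
          intro u hu
          apply ENNReal.ofReal_le_ofReal
          apply Real.exp_le_exp.2
          have h3 : m * u ≤ δ := by
            have := hu.2
            calc m * u ≤ m * (δ / m) := by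
                  apply mul_le_mul_of_nonneg_left hu.2 hm.le
              _ = δ := by field_simp
          linarith
        have h4 := le_trans h2 h1
        have h5 := ENNReal.toReal_mono hfin h4
        rw [ENNReal.toReal_mul, ENNReal.toReal_ofReal (Real.exp_pos _).le] at h5
        exact h5
      rw [heδ] at hFlow
      rw [← mul_div_assoc]
      exact (div_le_div_iff_of_pos_right hgm).2 hFlow
    have hgt : ∀ᶠ m : ℝ in atTop, e < (μ (Set.Ioc 0 (δ / m))).toReal / g m :=
      hE.eventually_const_lt he1
    filter_upwards [hlow, hgt] with m h1 h2
    calc a < r := har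
      _ = e * e := hee.symm
      _ < e * ((μ (Set.Ioc 0 (δ / m))).toReal / g m) := by
          exact mul_lt_mul_of_pos_left h2 hepos
      _ ≤ F m / g m := h1
  · -- upper bound
    intro b hb
    set s : ℝ → ℝ := fun m => Real.log m / (2 * m) with hsdef
    have hspos : ∀ᶠ m : ℝ in atTop, 0 < s m := by
      filter_upwards [eventually_gt_atTop 1, hlogpos] with m hm hlm
      have : 0 < 2 * m := by linarith
      exact div_pos hlm this
    have hratio : Tendsto (fun m => -Real.log (s m) / Real.log m) atTop (nhds 1) := by
      have t1 : Tendsto (fun m : ℝ => Real.log 2 / Real.log m) atTop (nhds 0) :=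
        tendsto_const_nhds.div_atTop hlog
      have t2 : Tendsto (fun m : ℝ => Real.log (Real.log m) / Real.log m) atTop (nhds 0) :=
        hloglog.comp hlog
      have h2 := ((tendsto_const_nhds (x := (1:ℝ))).add t1).sub t2
      rw [add_zero, sub_zero] at h2
      apply h2.congr'
      filter_upwards [eventually_gt_atTop 1, hlogpos] with m hm hlm
      have hm0 : (0:ℝ) < m := by linarith
      rw [hsdef]
      simp only
      rw [Real.log_div hlm.ne' (by positivity : (2*m:ℝ) ≠ 0),
        Real.log_mul (two_ne_zero) hm0.ne']
      field_simp
      ring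
    have hE2 := keyE s hspos hratio
    have hCq : Tendsto (fun m : ℝ =>
        Real.exp (-(Real.log m / 2)) * (μ Set.univ).toReal / g m) atTop (nhds 0) := by
      have hpar : Tendsto (fun x : ℝ =>
          -(1/2) + α * (Real.log x / x) - Real.log (L x) / x) atTop (nhds (-(1/2))) := by
        have h2 := ((tendsto_const_nhds (x := -(1/2:ℝ))).add
          (hloglog.const_mul α)).sub (sv_log_div L hLpos hLmeas hsv)
        simpa using h2
      have hX : Tendsto (fun x : ℝ =>
          x * (-(1/2) + α * (Real.log x / x) - Real.log (L x) / x)) atTop atBot :=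
        tendsto_id.atTop_mul_neg (by norm_num) hpar
      have hexp := Real.tendsto_exp_atBot.comp (hX.comp hlog)
      have h0 : Tendsto (fun m : ℝ => Real.exp (-(Real.log m / 2)) / g m) atTop (nhds 0) := by
        apply hexp.congr'
        filter_upwards [hlogpos] with m hlm
        simp only [Function.comp_apply]
        have hgm : 0 < g m := mul_pos (Real.rpow_pos_of_pos hlm _) (hLpos _)
        rw [eq_div_iff hgm.ne', ← Real.exp_log hgm, ← Real.exp_add]
        congr 1
        rw [hgdef]
        simp only
        rw [Real.log_mul (Real.rpow_pos_of_pos hlm _).ne' (hLpos _).ne', Real.log_rpow hlm]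
        field_simp
        ring
      have h3 := h0.mul_const (μ Set.univ).toReal
      rw [zero_mul] at h3
      apply h3.congr
      intro m
      ring
    have hup : ∀ᶠ m : ℝ in atTop, F m / g m ≤ (μ (Set.Ioc 0 (s m))).toReal / g m +
        Real.exp (-(Real.log m / 2)) * (μ Set.univ).toReal / g m := by
      have hsc : ∀ᶠ m : ℝ in atTop, s m ≤ c := by
        have h2 : Tendsto s atTop (nhds 0) := by
          have h3 := hloglog.const_mul (1/2 : ℝ)
          rw [mul_zero] at h3
          apply h3.congr
          intro m
          rw [hsdef]
          simp only
          ring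
        exact h2.eventually_le_const hc
      filter_upwards [eventually_gt_atTop 1, hspos, hsc, hgpos, hFfin, hlogpos]
        with m hm hsm hscm hgm hfin hlm
      have hm0 : (0:ℝ) < m := by linarith
      have hms : m * s m = Real.log m / 2 := by
        rw [hsdef]; field_simp
      have p1 : (∫⁻ u in Set.Ioc 0 (s m), ENNReal.ofReal (Real.exp (-(m * u))) ∂μ)
          ≤ μ (Set.Ioc 0 (s m)) := by
        calc (∫⁻ u in Set.Ioc 0 (s m), ENNReal.ofReal (Real.exp (-(m * u))) ∂μ)
            ≤ ∫⁻ _ in Set.Ioc 0 (s m), 1 ∂μ := by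
              apply setLIntegral_mono' measurableSet_Ioc
              intro u hu
              rw [show (1:ENNReal) = ENNReal.ofReal 1 by simp]
              apply ENNReal.ofReal_le_ofReal
              rw [Real.exp_le_one_iff]
              nlinarith [hu.1]
          _ = μ (Set.Ioc 0 (s m)) := setLIntegral_one _
      have p2 : (∫⁻ u in Set.Ioc (s m) c, ENNReal.ofReal (Real.exp (-(m * u))) ∂μ)
          ≤ ENNReal.ofReal (Real.exp (-(Real.log m / 2))) * μ Set.univ := by
        calc (∫⁻ u in Set.Ioc (s m) c, ENNReal.ofReal (Real.exp (-(m * u))) ∂μ)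
            ≤ ∫⁻ _ in Set.Ioc (s m) c,
                ENNReal.ofReal (Real.exp (-(Real.log m / 2))) ∂μ := by
              apply setLIntegral_mono' measurableSet_Ioc
              intro u hu
              apply ENNReal.ofReal_le_ofReal
              apply Real.exp_le_exp.2
              have h3 : Real.log m / 2 ≤ m * u := by
                rw [← hms]
                exact mul_le_mul_of_nonneg_left hu.1.le hm0.le
              linarith
          _ = ENNReal.ofReal (Real.exp (-(Real.log m / 2))) * μ (Set.Ioc (s m) c) :=
              setLIntegral_const _ _
          _ ≤ ENNReal.ofReal (Real.exp (-(Real.log m / 2))) * μ Set.univ :=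
              mul_le_mul_right (measure_mono (Set.subset_univ _)) _
      have hsplit : (∫⁻ u in Set.Ioc 0 c, ENNReal.ofReal (Real.exp (-(m * u))) ∂μ)
          = (∫⁻ u in Set.Ioc 0 (s m), ENNReal.ofReal (Real.exp (-(m * u))) ∂μ)
            + ∫⁻ u in Set.Ioc (s m) c, ENNReal.ofReal (Real.exp (-(m * u))) ∂μ := by
        rw [← lintegral_union measurableSet_Ioc (Set.Ioc_disjoint_Ioc_of_le le_rfl),
          Set.Ioc_union_Ioc_eq_Ioc hsm.le hscm]
      have hFup : F m ≤ (μ (Set.Ioc 0 (s m))).toReal +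
          Real.exp (-(Real.log m / 2)) * (μ Set.univ).toReal := by
        have hRfin : μ (Set.Ioc 0 (s m)) +
            ENNReal.ofReal (Real.exp (-(Real.log m / 2))) * μ Set.univ ≠ ⊤ :=
          ENNReal.add_ne_top.2 ⟨measure_ne_top μ _,
            ENNReal.mul_ne_top ENNReal.ofReal_ne_top (measure_ne_top μ _)⟩
        have h4 : (∫⁻ u in Set.Ioc 0 c, ENNReal.ofReal (Real.exp (-(m * u))) ∂μ)
            ≤ μ (Set.Ioc 0 (s m)) +
              ENNReal.ofReal (Real.exp (-(Real.log m / 2))) * μ Set.univ := by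
          rw [hsplit]
          exact add_le_add p1 p2
        have h5 := ENNReal.toReal_mono hRfin h4
        rwa [ENNReal.toReal_add (measure_ne_top μ _)
            (ENNReal.mul_ne_top ENNReal.ofReal_ne_top (measure_ne_top μ _)),
          ENNReal.toReal_mul, ENNReal.toReal_ofReal (Real.exp_pos _).le] at h5
      calc F m / g m ≤ ((μ (Set.Ioc 0 (s m))).toReal +
            Real.exp (-(Real.log m / 2)) * (μ Set.univ).toReal) / g m :=
            (div_le_div_iff_of_pos_right hgm).2 hFup
        _ = _ := add_div _ _ _
    have hsum := hE2.add hCq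
    rw [add_zero] at hsum
    filter_upwards [hsum.eventually_lt_const hb, hup] with m h1 h2
    exact lt_of_le_of_lt h2 h1
end

section
/- Suppose the tail assumption P(log((1-A)/A) > x) = x^{-α}L(x) for x > η holds with α > 1 and L slowly varying. Let Z_l be the l-th generation of the branching process in random i.i.d. environment (A_i) with geometric offspring and one immigrant per generation, Z_0 = 0, Z_n = ∑_{i=1}^{Z_{n-1}+1} B_{n,i} where conditionally on the environment the B_{n,i} are i.i.d. geometric with success probability A_{n-1}. Then for every l ≥ 2: limsup_{m→∞} P(Z_l ≥ m) / [(log^{(l)} m)^{-α} L(log^{(l)} m)] ≤ ∑_{t=0}^{l-1} α^{-αt}, where log^{(l)} denotes the l-fold iterated logarithm. -/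
open MeasureTheory ProbabilityTheory Filter Set
open scoped ENNReal

lemma aux_geom_summable {a : ℝ} (ha : a ∈ Set.Ioo (0:ℝ) 1) :
    Summable (fun k : ℕ => (k:ℝ) * (a * (1-a)^k)) := by
  have hr : ‖1 - a‖ < 1 := by
    rw [Real.norm_eq_abs, abs_lt]; constructor <;> [linarith [ha.2]; linarith [ha.1]]
  have h := (summable_norm_pow_mul_geometric_of_norm_lt_one 1 hr).of_norm
  have := h.mul_left a
  apply this.congr
  intro k
  simp only [pow_one]
  ring

lemma aux_geom_mean {a : ℝ} (ha : a ∈ Set.Ioo (0:ℝ) 1) :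
    ∑' k : ℕ, (k:ℝ) * (a * (1-a)^k) = (1-a)/a := by
  have hr : ‖1 - a‖ < 1 := by
    rw [Real.norm_eq_abs, abs_lt]; constructor <;> [linarith [ha.2]; linarith [ha.1]]
  have h := tsum_coe_mul_geometric_of_norm_lt_one hr
  have h2 : ∑' k : ℕ, (k:ℝ) * (a * (1-a)^k) = a * ∑' k : ℕ, (k:ℝ) * (1-a)^k := by
    rw [← tsum_mul_left]; congr 1; ext k; ring
  rw [h2, h]
  have h1a : (1 - (1-a)) = a := by ring
  rw [h1a]
  have ha0 : a ≠ 0 := ne_of_gt ha.1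
  field_simp

lemma aux_geom_mean_ennreal {a : ℝ} (ha : a ∈ Set.Ioo (0:ℝ) 1) :
    ∑' k : ℕ, (k : ℝ≥0∞) * ENNReal.ofReal (a * (1-a)^k) = ENNReal.ofReal ((1-a)/a) := by
  have h1a : (0:ℝ) ≤ 1 - a := by linarith [ha.2]
  have hnn : ∀ k : ℕ, 0 ≤ (k:ℝ) * (a * (1-a)^k) := by
    intro k
    have h2 : (0:ℝ) ≤ (1-a)^k := pow_nonneg h1a k
    have h3 : (0:ℝ) ≤ a := le_of_lt ha.1
    have h4 : (0:ℝ) ≤ (k:ℝ) := Nat.cast_nonneg k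
    exact mul_nonneg h4 (mul_nonneg h3 h2)
  calc ∑' k : ℕ, (k : ℝ≥0∞) * ENNReal.ofReal (a * (1-a)^k)
      = ∑' k : ℕ, ENNReal.ofReal ((k:ℝ) * (a * (1-a)^k)) := by
        congr 1; ext k
        rw [ENNReal.ofReal_mul (Nat.cast_nonneg k)]
        congr 1
        exact (ENNReal.ofReal_natCast k).symm
    _ = ENNReal.ofReal (∑' k : ℕ, (k:ℝ) * (a * (1-a)^k)) := by
        rw [ENNReal.ofReal_tsum_of_nonneg hnn (aux_geom_summable ha)]
    _ = ENNReal.ofReal ((1-a)/a) := by rw [aux_geom_mean ha]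

lemma aux_iterlog_tendsto (j : ℕ) : Tendsto (Real.log^[j]) atTop atTop := by
  induction j with
  | zero => simpa using tendsto_id
  | succ j ih =>
      rw [Function.iterate_succ]
      exact ih.comp Real.tendsto_log_atTop

lemma aux_iterlog_chain (x : ℝ) (i : ℕ) :
    ∀ j, i ≤ j → (∀ t, i ≤ t → t ≤ j → 0 ≤ Real.log^[t] x) →
      Real.log^[j] x ≤ Real.log^[i] x := by
  intro j
  induction j with
  | zero => intro h _; simp_all
  | succ j ih =>
      intro hij hnn
      rcases Nat.lt_or_ge i (j+1) with h | h
      · have hij' : i ≤ j := by omega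
        have h1 : Real.log^[j] x ≤ Real.log^[i] x :=
          ih hij' (fun t ht1 ht2 => hnn t ht1 (by omega))
        have h2 : Real.log^[j+1] x ≤ Real.log^[j] x := by
          rw [Function.iterate_succ_apply']
          exact Real.log_le_self (hnn j hij' (by omega))
        linarith
      · have : i = j + 1 := by omega
        simp [this]

lemma aux_tail_lb (α : ℝ) (hα : 1 < α) (L : ℝ → ℝ) (hLpos : ∀ x, 0 < L x)
    (hsv1 : Tendsto (fun x => L (Real.exp 1 * x) / L x) atTop (nhds 1))
    (T : ℝ → ℝ) (hmono : ∀ ⦃u v : ℝ⦄, u ≤ v → T v ≤ T u) (η : ℝ)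
    (hT : ∀ x > η, T x = x ^ (-α) * L x) :
    ∃ c₀ > (0:ℝ), ∃ x₀ : ℝ, 1 ≤ x₀ ∧ ∀ v, x₀ ≤ v → c₀ * v ^ (-(α+1)) ≤ T v := by
  obtain ⟨x₁, hx₁⟩ := (eventually_atTop).1
    (hsv1.eventually (lt_mem_nhds (show (1:ℝ)/2 < 1 by norm_num)))
  set x₀ := max x₁ (max (η+1) 1) with hx₀def
  have hx₀1 : (1:ℝ) ≤ x₀ := le_max_of_le_right (le_max_right _ _)
  have hx₀0 : (0:ℝ) < x₀ := lt_of_lt_of_le one_pos hx₀1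
  have hx₀η : η < x₀ := lt_of_lt_of_le (lt_add_one η) (le_max_of_le_right (le_max_left _ _))
  have hx₀x₁ : x₁ ≤ x₀ := le_max_left _ _
  have hL2 : ∀ x, x₀ ≤ x → L x / 2 ≤ L (Real.exp 1 * x) := by
    intro x hx
    have h := hx₁ x (le_trans hx₀x₁ hx)
    have hLx := hLpos x
    have := (lt_div_iff₀ hLx).1 h
    linarith
  have hiter : ∀ n : ℕ, L x₀ / 2^n ≤ L (x₀ * Real.exp n) := by
    intro n
    induction n with
    | zero => simp
    | succ n ih =>
        have hxe : x₀ ≤ x₀ * Real.exp n := by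
          nth_rewrite 1 [← mul_one x₀]
          exact mul_le_mul_of_nonneg_left (Real.one_le_exp (Nat.cast_nonneg n)) hx₀0.le
        have h1 := hL2 _ hxe
        have h2 : x₀ * Real.exp (n+1:ℕ) = Real.exp 1 * (x₀ * Real.exp n) := by
          push_cast
          rw [Real.exp_add]
          ring
        rw [h2]
        calc L x₀ / 2^(n+1) = (L x₀ / 2^n) / 2 := by ring
          _ ≤ L (x₀ * Real.exp n) / 2 := by linarith
          _ ≤ L (Real.exp 1 * (x₀ * Real.exp n)) := h1
  refine ⟨Real.exp (-(α+1)) * (L x₀ * x₀),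
    mul_pos (Real.exp_pos _) (mul_pos (hLpos x₀) hx₀0), x₀, hx₀1, ?_⟩
  intro v hv
  have hv0 : (0:ℝ) < v := lt_of_lt_of_le hx₀0 hv
  set n := ⌈Real.log (v/x₀)⌉₊ with hndef
  have hdiv1 : (1:ℝ) ≤ v / x₀ := (one_le_div hx₀0).2 hv
  have hlog0 : 0 ≤ Real.log (v/x₀) := Real.log_nonneg hdiv1
  have hn1 : Real.log (v/x₀) ≤ n := Nat.le_ceil _
  have hn2 : (n:ℝ) ≤ Real.log (v/x₀) + 1 := le_of_lt (Nat.ceil_lt_add_one hlog0)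
  have hexplog : Real.exp (Real.log (v/x₀)) = v / x₀ := Real.exp_log (by positivity)
  have hvle : v ≤ x₀ * Real.exp n := by
    calc v = x₀ * (v / x₀) := by field_simp
      _ ≤ x₀ * Real.exp n := by
          apply mul_le_mul_of_nonneg_left _ hx₀0.le
          rw [← hexplog]
          exact Real.exp_le_exp.2 hn1
  have hub : x₀ * Real.exp n ≤ Real.exp 1 * v := by
    calc x₀ * Real.exp n ≤ x₀ * Real.exp (Real.log (v/x₀) + 1) :=
          mul_le_mul_of_nonneg_left (Real.exp_le_exp.2 hn2) hx₀0.le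
      _ = Real.exp 1 * v := by
          rw [Real.exp_add, hexplog]
          field_simp
  have h2n : (2:ℝ)^n ≤ Real.exp 1 * v / x₀ := by
    have h21 : (2:ℝ) = Real.exp (Real.log 2) := (Real.exp_log two_pos).symm
    have hlog2 : Real.log 2 ≤ 1 := by
      have := Real.log_le_sub_one_of_pos (show (0:ℝ) < 2 by norm_num)
      linarith
    calc (2:ℝ)^n = Real.exp (Real.log 2) ^ n := by rw [← h21]
      _ = Real.exp (n * Real.log 2) := by rw [← Real.exp_nat_mul]
      _ ≤ Real.exp (Real.log (v/x₀) + 1) := by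
          apply Real.exp_le_exp.2
          have hn0 : (0:ℝ) ≤ n := Nat.cast_nonneg n
          nlinarith
      _ = Real.exp 1 * v / x₀ := by rw [Real.exp_add, hexplog]; field_simp
  -- main chain
  have hxen_pos : (0:ℝ) < x₀ * Real.exp n := by positivity
  have hev_pos : (0:ℝ) < Real.exp 1 * v := by positivity
  have hTeq : T (x₀ * Real.exp n) = (x₀ * Real.exp n) ^ (-α) * L (x₀ * Real.exp n) :=
    hT _ (lt_of_lt_of_le hx₀η (by nlinarith [Real.one_le_exp (Nat.cast_nonneg n)]))
  have hstep1 : (Real.exp 1 * v) ^ (-α) ≤ (x₀ * Real.exp n) ^ (-α) :=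
    Real.rpow_le_rpow_of_nonpos hxen_pos hub (by linarith)
  have hstep2 : L x₀ * (x₀ / (Real.exp 1 * v)) ≤ L x₀ / 2^n := by
    have h1 : x₀ / (Real.exp 1 * v) ≤ 1 / 2^n := by
      rw [div_le_div_iff₀ hev_pos (by positivity)]
      calc x₀ * 2^n ≤ x₀ * (Real.exp 1 * v / x₀) :=
            mul_le_mul_of_nonneg_left h2n hx₀0.le
        _ = 1 * (Real.exp 1 * v) := by field_simp
    calc L x₀ * (x₀ / (Real.exp 1 * v)) ≤ L x₀ * (1 / 2^n) :=
          mul_le_mul_of_nonneg_left h1 (hLpos x₀).le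
      _ = L x₀ / 2^n := by ring
  have hchain : Real.exp (-(α+1)) * (L x₀ * x₀) * v ^ (-(α+1)) ≤ T v := by
    have hTv : T (x₀ * Real.exp n) ≤ T v := hmono hvle
    have hfinal : Real.exp (-(α+1)) * (L x₀ * x₀) * v ^ (-(α+1))
        = (Real.exp 1 * v) ^ (-α) * (L x₀ * (x₀ / (Real.exp 1 * v))) := by
      have hv' : v ^ (-(α+1)) = v ^ (-α) * v⁻¹ := by
        rw [show (-(α+1)) = (-α) + (-1) by ring, Real.rpow_add hv0, Real.rpow_neg_one]
      have hexp' : Real.exp (-(α+1)) = (Real.exp 1) ^ (-α) * (Real.exp 1)⁻¹ := by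
        rw [Real.exp_one_rpow, ← Real.exp_neg, ← Real.exp_add]
        congr 1
        ring
      rw [hv', hexp', Real.mul_rpow (Real.exp_pos 1).le hv0.le]
      field_simp
    calc Real.exp (-(α+1)) * (L x₀ * x₀) * v ^ (-(α+1))
        = (Real.exp 1 * v) ^ (-α) * (L x₀ * (x₀ / (Real.exp 1 * v))) := hfinal
      _ ≤ (x₀ * Real.exp n) ^ (-α) * (L x₀ / 2^n) := by
          apply mul_le_mul hstep1 hstep2
            (mul_nonneg (hLpos x₀).le (by positivity))
            (Real.rpow_pos_of_pos hxen_pos _).le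
      _ ≤ (x₀ * Real.exp n) ^ (-α) * L (x₀ * Real.exp n) := by
          apply mul_le_mul_of_nonneg_left (hiter n) (Real.rpow_pos_of_pos hxen_pos _).le
      _ = T (x₀ * Real.exp n) := hTeq.symm
      _ ≤ T v := hTv
  exact hchain
section Core
variable {Ω : Type*} [MeasurableSpace Ω] (μ : Measure Ω) [IsProbabilityMeasure μ]
variable (A : ℤ → Ω → ℝ) (B : ℕ → ℕ → Ω → ℕ)

/-- cylinder event -/
def bpreCyl (s : Finset (ℕ × ℕ)) (k : ℕ × ℕ → ℕ) : Set Ω :=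
  {ω | ∀ p ∈ s, B p.1 p.2 ω = k p}

def bpreClass (n : ℕ) : Set (Set Ω) :=
  {T | ∃ s : Finset (ℕ × ℕ), ∃ k : ℕ × ℕ → ℕ, (∀ p ∈ s, p.1 ≤ n) ∧ T = bpreCyl B s k}

def bpreMS (n : ℕ) : MeasurableSpace Ω := .generateFrom (bpreClass B n)

variable {A B}

lemma bpreCyl_meas (hmeasB : ∀ n i, Measurable (B n i)) (s : Finset (ℕ × ℕ)) (k : ℕ × ℕ → ℕ) :
    MeasurableSet (bpreCyl B s k) := by
  have : bpreCyl B s k = ⋂ p ∈ s, (B p.1 p.2) ⁻¹' {k p} := by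
    ext ω; simp [bpreCyl]
  rw [this]
  exact MeasurableSet.biInter s.countable_toSet
    (fun p _ => (hmeasB p.1 p.2) (measurableSet_singleton _))

lemma bpreMS_le (hmeasB : ∀ n i, Measurable (B n i)) (n : ℕ) :
    bpreMS B n ≤ ‹MeasurableSpace Ω› := by
  apply MeasurableSpace.generateFrom_le
  rintro T ⟨s, k, -, rfl⟩
  exact bpreCyl_meas hmeasB s k

lemma bpreMS_mono {n n' : ℕ} (h : n ≤ n') : bpreMS B n ≤ bpreMS B n' := by
  apply MeasurableSpace.generateFrom_le
  rintro T ⟨s, k, hs, rfl⟩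
  exact MeasurableSpace.measurableSet_generateFrom ⟨s, k, fun p hp => (hs p hp).trans h, rfl⟩

lemma bpreClass_pi (n : ℕ) : IsPiSystem (bpreClass B (Ω := Ω) n) := by
  rintro T₁ ⟨s₁, k₁, hs₁, rfl⟩ T₂ ⟨s₂, k₂, hs₂, rfl⟩ hne
  obtain ⟨ω, hω₁, hω₂⟩ := hne
  refine ⟨s₁ ∪ s₂, fun p => if p ∈ s₁ then k₁ p else k₂ p, ?_, ?_⟩
  · intro p hp
    rcases Finset.mem_union.1 hp with h | h
    · exact hs₁ p h
    · exact hs₂ p h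
  · ext ω'
    constructor
    · rintro ⟨h₁, h₂⟩
      intro p hp
      rcases Finset.mem_union.1 hp with h | h
      · simp only [if_pos h]; exact h₁ p h
      · by_cases h' : p ∈ s₁
        · simp only [if_pos h']; exact h₁ p h'
        · simp only [if_neg h']; exact h₂ p h
    · intro h
      constructor
      · intro p hp
        have := h p (Finset.mem_union_left _ hp)
        simpa only [if_pos hp] using this
      · intro p hp
        have := h p (Finset.mem_union_right _ hp)
        by_cases h' : p ∈ s₁
        · simp only [if_pos h'] at this
          rw [this]
          exact (hω₁ p h').symm.trans (hω₂ p hp)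
        · simpa only [if_neg h'] using this

/-- transfer lemma: integrating a cylinder indicator against an environment functional -/
lemma bpreQ (hmeasA : ∀ i, Measurable (A i)) (hmeasB : ∀ n i, Measurable (B n i))
    (hcond : ∀ (s : Finset (ℕ × ℕ)) (k : ℕ × ℕ → ℕ) (E : Set (ℤ → ℝ)),
      MeasurableSet E →
      μ {ω | (∀ p ∈ s, B p.1 p.2 ω = k p) ∧ (fun i => A i ω) ∈ E}
        = ∫⁻ ω in {ω | (fun i => A i ω) ∈ E},
            ∏ p ∈ s, ENNReal.ofReal
              (A ((p.1 : ℤ) - 1) ω * (1 - A ((p.1 : ℤ) - 1) ω) ^ k p) ∂μ)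
    (s : Finset (ℕ × ℕ)) (k : ℕ × ℕ → ℕ) (φ : (ℤ → ℝ) → ℝ≥0∞) (hφ : Measurable φ) :
    ∫⁻ ω, (bpreCyl B s k).indicator (fun _ => (1:ℝ≥0∞)) ω * φ (fun i => A i ω) ∂μ
      = ∫⁻ ω, (∏ p ∈ s, ENNReal.ofReal
          (A ((p.1 : ℤ) - 1) ω * (1 - A ((p.1 : ℤ) - 1) ω) ^ k p)) * φ (fun i => A i ω) ∂μ := by
  have hAv : Measurable (fun ω => (fun i => A i ω) : Ω → (ℤ → ℝ)) :=
    measurable_pi_lambda _ hmeasA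
  have hcylm : MeasurableSet (bpreCyl B s k) := bpreCyl_meas hmeasB s k
  have hind : Measurable ((bpreCyl B s k).indicator (fun _ => (1:ℝ≥0∞))) :=
    measurable_const.indicator hcylm
  have hdens : Measurable (fun ω => ∏ p ∈ s, ENNReal.ofReal
      (A ((p.1 : ℤ) - 1) ω * (1 - A ((p.1 : ℤ) - 1) ω) ^ k p)) := by
    apply Finset.measurable_prod
    intro p _
    exact ENNReal.measurable_ofReal.comp
      (((hmeasA _).mul (((measurable_const.sub (hmeasA _))).pow_const _)))
  set ν₁ := μ.withDensity ((bpreCyl B s k).indicator (fun _ => (1:ℝ≥0∞))) with hν₁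
  set ν₂ := μ.withDensity (fun ω => ∏ p ∈ s, ENNReal.ofReal
      (A ((p.1 : ℤ) - 1) ω * (1 - A ((p.1 : ℤ) - 1) ω) ^ k p)) with hν₂
  have hmap : ν₁.map (fun ω => (fun i => A i ω)) = ν₂.map (fun ω => (fun i => A i ω)) := by
    ext E hE
    rw [Measure.map_apply hAv hE, Measure.map_apply hAv hE, hν₁, hν₂,
      withDensity_apply _ (hAv hE), withDensity_apply _ (hAv hE)]
    have h1 : ∫⁻ ω in (fun ω => (fun i => A i ω)) ⁻¹' E,
        (bpreCyl B s k).indicator (fun _ => (1:ℝ≥0∞)) ω ∂μ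
        = μ (bpreCyl B s k ∩ (fun ω => (fun i => A i ω)) ⁻¹' E) := by
      have h := lintegral_indicator_const (μ := μ.restrict ((fun ω => (fun i => A i ω)) ⁻¹' E))
        hcylm (1:ℝ≥0∞)
      simp only [one_mul] at h
      rw [h, Measure.restrict_apply hcylm]
    rw [h1]
    have hseteq : bpreCyl B s k ∩ (fun ω => (fun i => A i ω)) ⁻¹' E
        = {ω | (∀ p ∈ s, B p.1 p.2 ω = k p) ∧ (fun i => A i ω) ∈ E} := rfl
    rw [hseteq, hcond s k E hE]
    rfl
  have hwd1 : ∫⁻ ω, φ (fun i => A i ω) ∂ν₁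
      = ∫⁻ ω, (bpreCyl B s k).indicator (fun _ => (1:ℝ≥0∞)) ω * φ (fun i => A i ω) ∂μ := by
    have h := lintegral_withDensity_eq_lintegral_mul μ hind (hφ.comp hAv)
    simp only [Function.comp, Pi.mul_apply] at h
    exact h
  have hwd2 : ∫⁻ ω, φ (fun i => A i ω) ∂ν₂
      = ∫⁻ ω, (∏ p ∈ s, ENNReal.ofReal
          (A ((p.1 : ℤ) - 1) ω * (1 - A ((p.1 : ℤ) - 1) ω) ^ k p)) * φ (fun i => A i ω) ∂μ := by
    have h := lintegral_withDensity_eq_lintegral_mul μ hdens (hφ.comp hAv)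
    simp only [Function.comp, Pi.mul_apply] at h
    exact h
  have hm1 : ∫⁻ ω, φ (fun i => A i ω) ∂ν₁ = ∫⁻ a, φ a ∂(ν₁.map (fun ω => (fun i => A i ω))) :=
    (lintegral_map hφ hAv).symm
  have hm2 : ∫⁻ ω, φ (fun i => A i ω) ∂ν₂ = ∫⁻ a, φ a ∂(ν₂.map (fun ω => (fun i => A i ω))) :=
    (lintegral_map hφ hAv).symm
  rw [← hwd1, ← hwd2, hm1, hm2, hmap]

variable {Z : ℕ → Ω → ℕ}

lemma bpreZ_meas (hZ0 : ∀ ω, Z 0 ω = 0)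
    (hZrec : ∀ n ω, Z (n + 1) ω = ∑ i ∈ Finset.range (Z n ω + 1), B (n + 1) i ω) :
    ∀ n z, MeasurableSet[bpreMS B n] {ω | Z n ω = z} := by
  intro n
  induction n with
  | zero =>
      intro z
      rcases eq_or_ne z 0 with rfl | hz
      · have : {ω | Z 0 ω = 0} = univ := by ext ω; simp [hZ0]
        rw [this]; exact @MeasurableSet.univ Ω (bpreMS B 0)
      · have : {ω | Z 0 ω = z} = ∅ := by
          ext ω; simp only [mem_setOf_eq, mem_empty_iff_false, iff_false]
          rw [hZ0]; exact fun h => hz h.symm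
        rw [this]; exact @MeasurableSet.empty Ω (bpreMS B 0)
  | succ n ih =>
      intro z
      classical
      have hset : {ω | Z (n+1) ω = z} = ⋃ (z' : ℕ), ⋃ (κ : Fin (z'+1) → ℕ),
          ⋃ (_ : ∑ i, κ i = z),
          ({ω | Z n ω = z'} ∩ bpreCyl B ((Finset.range (z'+1)).image (fun i => (n+1, i)))
            (fun p => if h : p.2 < z'+1 then κ ⟨p.2, h⟩ else 0)) := by
        ext ω
        simp only [mem_iUnion, mem_inter_iff, mem_setOf_eq]
        constructor
        · intro hz
          refine ⟨Z n ω, fun i => B (n+1) i ω, ?_, rfl, ?_⟩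
          · rw [← hz, hZrec n ω]
            exact Fin.sum_univ_eq_sum_range (fun j => B (n+1) j ω) (Z n ω + 1)
          · intro p hp
            simp only [Finset.mem_image, Finset.mem_range] at hp
            obtain ⟨i, hi, rfl⟩ := hp
            simp [bpreCyl, hi]
        · rintro ⟨z', κ, hsum, hzn, hcylω⟩
          rw [hZrec n ω, hzn, ← hsum]
          rw [← Fin.sum_univ_eq_sum_range (fun i => B (n+1) i ω) (z'+1)]
          apply Finset.sum_congr rfl
          intro i _
          have := hcylω (n+1, (i:ℕ))
            (by simp only [Finset.mem_image, Finset.mem_range]; exact ⟨i, i.isLt, rfl⟩)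
          simpa [i.isLt] using this
      rw [hset]
      apply MeasurableSet.iUnion; intro z'
      apply MeasurableSet.iUnion; intro κ
      apply MeasurableSet.iUnion; intro hsum
      refine MeasurableSet.inter ((bpreMS_mono (Nat.le_succ n)) _ (ih z')) ?_
      exact MeasurableSpace.measurableSet_generateFrom
        ⟨_, _, by
          intro p hp
          simp only [Finset.mem_image, Finset.mem_range] at hp
          obtain ⟨i, _, rfl⟩ := hp
          exact le_refl _, rfl⟩


lemma bpreR (hmeasA : ∀ i, Measurable (A i)) (hmeasB : ∀ n i, Measurable (B n i))
    (hA01 : ∀ i ω, A i ω ∈ Set.Ioo (0:ℝ) 1)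
    (hcond : ∀ (s : Finset (ℕ × ℕ)) (k : ℕ × ℕ → ℕ) (E : Set (ℤ → ℝ)),
      MeasurableSet E →
      μ {ω | (∀ p ∈ s, B p.1 p.2 ω = k p) ∧ (fun i => A i ω) ∈ E}
        = ∫⁻ ω in {ω | (fun i => A i ω) ∈ E},
            ∏ p ∈ s, ENNReal.ofReal
              (A ((p.1 : ℤ) - 1) ω * (1 - A ((p.1 : ℤ) - 1) ω) ^ k p) ∂μ)
    (n i : ℕ) (E' : Set (ℤ → ℝ)) (hE' : MeasurableSet E')
    (S : Set Ω) (hS : MeasurableSet[bpreMS B n] S) :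
    ∫⁻ ω, S.indicator (fun _ => (1:ℝ≥0∞)) ω * (B (n+1) i ω : ℝ≥0∞)
        * E'.indicator (fun _ => (1:ℝ≥0∞)) (fun j => A j ω) ∂μ
      = ∫⁻ ω, S.indicator (fun _ => (1:ℝ≥0∞)) ω * ENNReal.ofReal ((1 - A (n:ℤ) ω) / A (n:ℤ) ω)
        * E'.indicator (fun _ => (1:ℝ≥0∞)) (fun j => A j ω) ∂μ := by
  classical
  have hAv : Measurable (fun ω => (fun j => A j ω) : Ω → ℤ → ℝ) :=
    measurable_pi_lambda _ hmeasA
  have hSamb : MeasurableSet S := bpreMS_le hmeasB n S hS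
  have hφE : Measurable (E'.indicator (fun _ => (1:ℝ≥0∞))) := measurable_const.indicator hE'
  set d1 : ℕ → Ω → ℝ≥0∞ := fun k ω => ({ω' | B (n+1) i ω' = k}).indicator (fun _ => 1) ω
      * E'.indicator (fun _ => 1) (fun j => A j ω) with hd1
  set d2 : ℕ → Ω → ℝ≥0∞ := fun k ω => ENNReal.ofReal (A (n:ℤ) ω * (1 - A (n:ℤ) ω)^k)
      * E'.indicator (fun _ => 1) (fun j => A j ω) with hd2
  have hBset : ∀ k : ℕ, MeasurableSet {ω' | B (n+1) i ω' = k} :=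
    fun k => (hmeasB _ i) (measurableSet_singleton k)
  have hd1m : ∀ k, Measurable (d1 k) :=
    fun k => (measurable_const.indicator (hBset k)).mul (hφE.comp hAv)
  have hd2m : ∀ k, Measurable (d2 k) := fun k =>
    (ENNReal.measurable_ofReal.comp
      ((hmeasA _).mul ((measurable_const.sub (hmeasA _)).pow_const k))).mul (hφE.comp hAv)
  have hd1le : ∀ k ω, d1 k ω ≤ 1 := by
    intro k ω
    simp only [hd1]
    by_cases h1 : ω ∈ {ω' | B (n+1) i ω' = k} <;>
      by_cases h2 : (fun j => A j ω) ∈ E' <;>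
      simp [Set.indicator, h1, h2]
  have hd2le : ∀ k ω, d2 k ω ≤ 1 := by
    intro k ω
    simp only [hd2]
    by_cases h2 : (fun j => A j ω) ∈ E'
    · rw [Set.indicator_of_mem h2, mul_one]
      have ha := hA01 (n:ℤ) ω
      have h2' : (1 - A (n:ℤ) ω)^k ≤ 1 :=
        pow_le_one₀ (by linarith [ha.2]) (by linarith [ha.1])
      have h1 : A (n:ℤ) ω * (1 - A (n:ℤ) ω)^k ≤ 1 := by nlinarith [ha.1, ha.2]
      calc ENNReal.ofReal (A (n:ℤ) ω * (1 - A (n:ℤ) ω)^k) ≤ ENNReal.ofReal 1 :=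
            ENNReal.ofReal_le_ofReal h1
        _ = 1 := ENNReal.ofReal_one
    · rw [Set.indicator_of_notMem h2, mul_zero]; exact zero_le_one
  have hfin : ∀ (dd : Ω → ℝ≥0∞), Measurable dd → (∀ ω, dd ω ≤ 1) → ∀ T : Set Ω,
      MeasurableSet T → μ.withDensity dd T ≠ ∞ := by
    intro dd hddm hdd T hT
    rw [withDensity_apply _ hT]
    have h1 : ∫⁻ ω in T, dd ω ∂μ ≤ ∫⁻ _ in T, 1 ∂μ :=
      lintegral_mono (fun ω => hdd ω)
    rw [setLIntegral_one] at h1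
    exact (h1.trans_lt (lt_of_le_of_lt (measure_mono (subset_univ T)) (by
      rw [measure_univ]; exact ENNReal.one_lt_top))).ne
  have hidx : ((n+1:ℕ):ℤ) - 1 = (n:ℤ) := by push_cast; ring
  have key : ∀ k : ℕ, ∀ T : Set Ω, MeasurableSet[bpreMS B n] T →
      μ.withDensity (d1 k) T = μ.withDensity (d2 k) T := by
    intro k
    have hbasic : ∀ T ∈ bpreClass B (Ω := Ω) n,
        μ.withDensity (d1 k) T = μ.withDensity (d2 k) T := by
      rintro T ⟨s, k₀, hrows, rfl⟩
      have hcylm := bpreCyl_meas (B := B) hmeasB s k₀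
      have hp : ((n+1:ℕ), i) ∉ s := by
        intro h
        have h2 := hrows _ h
        simp only at h2
        omega
      set k' : ℕ × ℕ → ℕ := Function.update k₀ ((n+1:ℕ), i) k with hk'
      have hL : μ.withDensity (d1 k) (bpreCyl B s k₀)
          = μ {ω | (∀ p ∈ insert ((n+1:ℕ), i) s, B p.1 p.2 ω = k' p)
              ∧ (fun j => A j ω) ∈ E'} := by
        rw [withDensity_apply _ hcylm]
        have hptw : ∀ ω, d1 k ω = ({ω' | B (n+1) i ω' = k}
            ∩ ((fun ω => (fun j => A j ω)) ⁻¹' E')).indicator (fun _ => (1:ℝ≥0∞)) ω := by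
          intro ω
          simp only [hd1]
          by_cases h1 : ω ∈ {ω' | B (n+1) i ω' = k}
          · by_cases h2 : (fun j => A j ω) ∈ E'
            · rw [Set.indicator_of_mem h1, Set.indicator_of_mem h2,
                Set.indicator_of_mem (Set.mem_inter h1 h2), one_mul]
            · rw [Set.indicator_of_mem h1, Set.indicator_of_notMem h2,
                Set.indicator_of_notMem (s := {ω' | B (n+1) i ω' = k}
                  ∩ ((fun ω => (fun j => A j ω)) ⁻¹' E')) (fun hc => h2 hc.2), mul_zero]
          · rw [Set.indicator_of_notMem h1,
              Set.indicator_of_notMem (s := {ω' | B (n+1) i ω' = k}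
                ∩ ((fun ω => (fun j => A j ω)) ⁻¹' E')) (fun hc => h1 hc.1), zero_mul]
        rw [lintegral_congr hptw]
        have h := lintegral_indicator_const (μ := μ.restrict (bpreCyl B s k₀))
          ((hBset k).inter (hAv hE')) (1:ℝ≥0∞)
        simp only [one_mul] at h
        rw [h, Measure.restrict_apply ((hBset k).inter (hAv hE'))]
        congr 1
        ext ω
        simp only [mem_inter_iff, mem_setOf_eq, mem_preimage, Finset.mem_insert]
        constructor
        · rintro ⟨⟨hB, hE⟩, hcyl⟩
          refine ⟨?_, hE⟩
          rintro p (rfl | hps)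
          · rw [hk', Function.update_self]; exact hB
          · rw [hk', Function.update_of_ne (by rintro rfl; exact hp hps)]; exact hcyl p hps
        · rintro ⟨hall, hE⟩
          refine ⟨⟨?_, hE⟩, ?_⟩
          · have := hall _ (Or.inl rfl); rwa [hk', Function.update_self] at this
          · intro p hps
            have := hall p (Or.inr hps)
            rwa [hk', Function.update_of_ne (by rintro rfl; exact hp hps)] at this
      set φk : (ℤ → ℝ) → ℝ≥0∞ := fun a => ENNReal.ofReal (a (n:ℤ) * (1 - a (n:ℤ))^k)
          * E'.indicator (fun _ => (1:ℝ≥0∞)) a with hφk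
      have hφkm : Measurable φk := by
        apply Measurable.mul
        · exact ENNReal.measurable_ofReal.comp
            ((measurable_pi_apply _).mul ((measurable_const.sub (measurable_pi_apply _)).pow_const k))
        · exact hφE
      have hQ := bpreQ μ hmeasA hmeasB hcond s k₀ φk hφkm
      have hR : μ.withDensity (d2 k) (bpreCyl B s k₀)
          = ∫⁻ ω in {ω | (fun j => A j ω) ∈ E'},
              ∏ p ∈ insert ((n+1:ℕ), i) s, ENNReal.ofReal
                (A ((p.1:ℤ)-1) ω * (1 - A ((p.1:ℤ)-1) ω) ^ k' p) ∂μ := by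
        have hstep1 : μ.withDensity (d2 k) (bpreCyl B s k₀)
            = ∫⁻ ω, (bpreCyl B s k₀).indicator (fun _ => (1:ℝ≥0∞)) ω
                * φk (fun j => A j ω) ∂μ := by
          rw [withDensity_apply _ hcylm, ← lintegral_indicator hcylm]
          apply lintegral_congr
          intro ω
          by_cases h : ω ∈ bpreCyl B s k₀ <;> simp [h, hd2, hφk]
        have hstep2 : ∫⁻ ω in {ω | (fun j => A j ω) ∈ E'},
              ∏ p ∈ insert ((n+1:ℕ), i) s, ENNReal.ofReal
                (A ((p.1:ℤ)-1) ω * (1 - A ((p.1:ℤ)-1) ω) ^ k' p) ∂μ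
            = ∫⁻ ω, (∏ p ∈ s, ENNReal.ofReal
                (A ((p.1:ℤ)-1) ω * (1 - A ((p.1:ℤ)-1) ω) ^ k₀ p)) * φk (fun j => A j ω) ∂μ := by
          have hmeasset : MeasurableSet {ω : Ω | (fun j => A j ω) ∈ E'} := hAv hE'
          rw [← lintegral_indicator hmeasset]
          apply lintegral_congr
          intro ω
          have hupd : k' ((n+1:ℕ), i) = k := by rw [hk', Function.update_self]
          have hupd2 : ∀ p ∈ s, k' p = k₀ p := by
            intro p hps
            rw [hk', Function.update_of_ne (by rintro rfl; exact hp hps)]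
          by_cases h : (fun j => A j ω) ∈ E'
          · simp only [Set.indicator_of_mem
              (show ω ∈ {ω : Ω | (fun j => A j ω) ∈ E'} from h)]
            rw [Finset.prod_insert hp]
            simp only [hφk, Set.indicator_of_mem h, hupd, hidx]
            rw [Finset.prod_congr rfl (fun p hps => by rw [hupd2 p hps])]
            ring
          · simp only [Set.indicator_of_notMem
              (show ω ∉ {ω : Ω | (fun j => A j ω) ∈ E'} from h)]
            simp only [hφk, Set.indicator_of_notMem h]
            ring
        rw [hstep1, hQ, ← hstep2]
      rw [hL, hcond (insert ((n+1:ℕ), i) s) k' E' hE', ← hR]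
    have htot : μ.withDensity (d1 k) univ = μ.withDensity (d2 k) univ :=
      hbasic univ ⟨∅, fun _ => 0, by simp, by ext ω; simp [bpreCyl]⟩
    intro T hT
    refine MeasurableSpace.induction_on_inter (m := bpreMS B n)
      (C := fun T _ => μ.withDensity (d1 k) T = μ.withDensity (d2 k) T)
      rfl (bpreClass_pi n) (by simp) hbasic ?_ ?_ T hT
    · intro t htm hC
      have htamb := bpreMS_le hmeasB n t htm
      rw [measure_compl htamb (hfin _ (hd1m k) (hd1le k) t htamb),
        measure_compl htamb (hfin _ (hd2m k) (hd2le k) t htamb), hC, htot]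
    · intro f hd hfm hC
      rw [measure_iUnion hd (fun j => bpreMS_le hmeasB n _ (hfm j)),
        measure_iUnion hd (fun j => bpreMS_le hmeasB n _ (hfm j))]
      exact tsum_congr hC
  -- convert the measure identity to lintegral identities
  have Ik : ∀ k : ℕ, ∫⁻ ω, S.indicator (fun _ => (1:ℝ≥0∞)) ω * d1 k ω ∂μ
      = ∫⁻ ω, S.indicator (fun _ => (1:ℝ≥0∞)) ω * d2 k ω ∂μ := by
    intro k
    have h := key k S hS
    rw [withDensity_apply _ hSamb, withDensity_apply _ hSamb] at h
    rw [← lintegral_indicator hSamb, ← lintegral_indicator hSamb] at h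
    calc ∫⁻ ω, S.indicator (fun _ => (1:ℝ≥0∞)) ω * d1 k ω ∂μ
        = ∫⁻ ω, S.indicator (d1 k) ω ∂μ := by
          apply lintegral_congr; intro ω
          by_cases h' : ω ∈ S <;> simp [h']
      _ = ∫⁻ ω, S.indicator (d2 k) ω ∂μ := h
      _ = ∫⁻ ω, S.indicator (fun _ => (1:ℝ≥0∞)) ω * d2 k ω ∂μ := by
          apply lintegral_congr; intro ω
          by_cases h' : ω ∈ S <;> simp [h']
  -- now sum over k
  have hmeas1 : ∀ k : ℕ, Measurable (fun ω => (k:ℝ≥0∞)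
      * (S.indicator (fun _ => (1:ℝ≥0∞)) ω * d1 k ω)) :=
    fun k => (measurable_const.mul ((measurable_const.indicator hSamb).mul (hd1m k)))
  have hmeas2 : ∀ k : ℕ, Measurable (fun ω => (k:ℝ≥0∞)
      * (S.indicator (fun _ => (1:ℝ≥0∞)) ω * d2 k ω)) :=
    fun k => (measurable_const.mul ((measurable_const.indicator hSamb).mul (hd2m k)))
  calc ∫⁻ ω, S.indicator (fun _ => (1:ℝ≥0∞)) ω * (B (n+1) i ω : ℝ≥0∞)
        * E'.indicator (fun _ => (1:ℝ≥0∞)) (fun j => A j ω) ∂μ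
      = ∫⁻ ω, ∑' k : ℕ, (k:ℝ≥0∞) * (S.indicator (fun _ => (1:ℝ≥0∞)) ω * d1 k ω) ∂μ := by
        apply lintegral_congr
        intro ω
        rw [tsum_eq_single (B (n+1) i ω) ?_]
        · have hmem : ω ∈ {ω' | B (n+1) i ω' = B (n+1) i ω} := rfl
          simp only [hd1]
          simp only [Set.indicator_of_mem hmem]
          ring
        · intro k hk
          have hnotmem : ω ∉ {ω' | B (n+1) i ω' = k} := fun h => hk (h ▸ rfl)
          simp only [hd1]
          simp only [Set.indicator_of_notMem hnotmem]
          ring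
    _ = ∑' k : ℕ, ∫⁻ ω, (k:ℝ≥0∞) * (S.indicator (fun _ => (1:ℝ≥0∞)) ω * d1 k ω) ∂μ :=
        lintegral_tsum (fun k => (hmeas1 k).aemeasurable)
    _ = ∑' k : ℕ, ∫⁻ ω, (k:ℝ≥0∞) * (S.indicator (fun _ => (1:ℝ≥0∞)) ω * d2 k ω) ∂μ := by
        apply tsum_congr
        intro k
        rw [lintegral_const_mul _ (f := fun ω => S.indicator (fun _ => (1:ℝ≥0∞)) ω * d1 k ω)
            ((measurable_const.indicator hSamb).mul (hd1m k)),
          lintegral_const_mul _ (f := fun ω => S.indicator (fun _ => (1:ℝ≥0∞)) ω * d2 k ω)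
            ((measurable_const.indicator hSamb).mul (hd2m k)), Ik k]
    _ = ∫⁻ ω, ∑' k : ℕ, (k:ℝ≥0∞) * (S.indicator (fun _ => (1:ℝ≥0∞)) ω * d2 k ω) ∂μ :=
        (lintegral_tsum (fun k => (hmeas2 k).aemeasurable)).symm
    _ = ∫⁻ ω, S.indicator (fun _ => (1:ℝ≥0∞)) ω * ENNReal.ofReal ((1 - A (n:ℤ) ω) / A (n:ℤ) ω)
        * E'.indicator (fun _ => (1:ℝ≥0∞)) (fun j => A j ω) ∂μ := by
        apply lintegral_congr
        intro ω
        have hrearr : ∀ k : ℕ, (k:ℝ≥0∞) * (S.indicator (fun _ => (1:ℝ≥0∞)) ω * d2 k ω)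
            = (S.indicator (fun _ => (1:ℝ≥0∞)) ω
                * E'.indicator (fun _ => (1:ℝ≥0∞)) (fun j => A j ω))
              * ((k:ℝ≥0∞) * ENNReal.ofReal (A (n:ℤ) ω * (1 - A (n:ℤ) ω)^k)) := by
          intro k
          simp only [hd2]
          ring
        rw [tsum_congr hrearr, ENNReal.tsum_mul_left, aux_geom_mean_ennreal (hA01 (n:ℤ) ω)]
        ring
lemma bpreRec (hmeasA : ∀ i, Measurable (A i)) (hmeasB : ∀ n i, Measurable (B n i))
    (hA01 : ∀ i ω, A i ω ∈ Set.Ioo (0:ℝ) 1)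
    (hcond : ∀ (s : Finset (ℕ × ℕ)) (k : ℕ × ℕ → ℕ) (E : Set (ℤ → ℝ)),
      MeasurableSet E →
      μ {ω | (∀ p ∈ s, B p.1 p.2 ω = k p) ∧ (fun i => A i ω) ∈ E}
        = ∫⁻ ω in {ω | (fun i => A i ω) ∈ E},
            ∏ p ∈ s, ENNReal.ofReal
              (A ((p.1 : ℤ) - 1) ω * (1 - A ((p.1 : ℤ) - 1) ω) ^ k p) ∂μ)
    (hZ0 : ∀ ω, Z 0 ω = 0)
    (hZrec : ∀ n ω, Z (n + 1) ω = ∑ i ∈ Finset.range (Z n ω + 1), B (n + 1) i ω)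
    (E' : Set (ℤ → ℝ)) (hE' : MeasurableSet E') (n : ℕ) :
    ∫⁻ ω, (Z (n+1) ω : ℝ≥0∞) * E'.indicator (fun _ => (1:ℝ≥0∞)) (fun j => A j ω) ∂μ
      = ∫⁻ ω, ((Z n ω : ℝ≥0∞) + 1) * ENNReal.ofReal ((1 - A (n:ℤ) ω) / A (n:ℤ) ω)
          * E'.indicator (fun _ => (1:ℝ≥0∞)) (fun j => A j ω) ∂μ := by
  classical
  have hAv : Measurable (fun ω => (fun j => A j ω) : Ω → ℤ → ℝ) :=
    measurable_pi_lambda _ hmeasA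
  have hφE : Measurable (E'.indicator (fun _ => (1:ℝ≥0∞))) := measurable_const.indicator hE'
  have hφAv : Measurable (fun ω : Ω => E'.indicator (fun _ => (1:ℝ≥0∞)) (fun j => A j ω)) :=
    hφE.comp hAv
  have hZset : ∀ z, MeasurableSet {ω | Z n ω = z} :=
    fun z => bpreMS_le hmeasB n _ (bpreZ_meas hZ0 hZrec n z)
  have hgm : Measurable (fun ω => ENNReal.ofReal ((1 - A (n:ℤ) ω) / A (n:ℤ) ω)) :=
    ENNReal.measurable_ofReal.comp ((measurable_const.sub (hmeasA _)).div (hmeasA _))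
  have hBm : ∀ i : ℕ, Measurable (fun ω => (B (n+1) i ω : ℝ≥0∞)) :=
    fun i => measurable_from_top.comp (hmeasB (n+1) i)
  have hmeasT : ∀ z : ℕ, Measurable (fun ω =>
      ({ω' | Z n ω' = z}).indicator (fun _ => (1:ℝ≥0∞)) ω
      * (∑ i ∈ Finset.range (z+1), (B (n+1) i ω : ℝ≥0∞))
      * E'.indicator (fun _ => (1:ℝ≥0∞)) (fun j => A j ω)) := by
    intro z
    exact ((measurable_const.indicator (hZset z)).mul
      (Finset.measurable_sum _ (fun i _ => hBm i))).mul hφAv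
  have hmeasU : ∀ z : ℕ, Measurable (fun ω =>
      ({ω' | Z n ω' = z}).indicator (fun _ => (1:ℝ≥0∞)) ω
      * ENNReal.ofReal ((1 - A (n:ℤ) ω) / A (n:ℤ) ω)
      * E'.indicator (fun _ => (1:ℝ≥0∞)) (fun j => A j ω)) :=
    fun z => ((measurable_const.indicator (hZset z)).mul hgm).mul hφAv
  calc ∫⁻ ω, (Z (n+1) ω : ℝ≥0∞) * E'.indicator (fun _ => (1:ℝ≥0∞)) (fun j => A j ω) ∂μ
      = ∫⁻ ω, ∑' z : ℕ, ({ω' | Z n ω' = z}).indicator (fun _ => (1:ℝ≥0∞)) ω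
          * (∑ i ∈ Finset.range (z+1), (B (n+1) i ω : ℝ≥0∞))
          * E'.indicator (fun _ => (1:ℝ≥0∞)) (fun j => A j ω) ∂μ := by
        apply lintegral_congr
        intro ω
        rw [tsum_eq_single (Z n ω) ?_]
        · rw [Set.indicator_of_mem (show ω ∈ {ω' | Z n ω' = Z n ω} from rfl), one_mul,
            hZrec n ω]
          congr 1
          push_cast
          rfl
        · intro z hz
          rw [Set.indicator_of_notMem (show ω ∉ {ω' | Z n ω' = z} from fun h => hz h.symm),
            zero_mul, zero_mul]
    _ = ∑' z : ℕ, ∫⁻ ω, ({ω' | Z n ω' = z}).indicator (fun _ => (1:ℝ≥0∞)) ω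
          * (∑ i ∈ Finset.range (z+1), (B (n+1) i ω : ℝ≥0∞))
          * E'.indicator (fun _ => (1:ℝ≥0∞)) (fun j => A j ω) ∂μ :=
        lintegral_tsum (fun z => (hmeasT z).aemeasurable)
    _ = ∑' z : ℕ, ((z:ℝ≥0∞) + 1) * ∫⁻ ω, ({ω' | Z n ω' = z}).indicator (fun _ => (1:ℝ≥0∞)) ω
          * ENNReal.ofReal ((1 - A (n:ℤ) ω) / A (n:ℤ) ω)
          * E'.indicator (fun _ => (1:ℝ≥0∞)) (fun j => A j ω) ∂μ := by
        apply tsum_congr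
        intro z
        have hexp : ∀ ω, ({ω' | Z n ω' = z}).indicator (fun _ => (1:ℝ≥0∞)) ω
            * (∑ i ∈ Finset.range (z+1), (B (n+1) i ω : ℝ≥0∞))
            * E'.indicator (fun _ => (1:ℝ≥0∞)) (fun j => A j ω)
            = ∑ i ∈ Finset.range (z+1), ({ω' | Z n ω' = z}).indicator (fun _ => (1:ℝ≥0∞)) ω
              * (B (n+1) i ω : ℝ≥0∞)
              * E'.indicator (fun _ => (1:ℝ≥0∞)) (fun j => A j ω) := by
          intro ω
          rw [Finset.mul_sum, Finset.sum_mul]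
        rw [lintegral_congr hexp,
          lintegral_finset_sum _ (f := fun i ω => ({ω' | Z n ω' = z}).indicator (fun _ => (1:ℝ≥0∞)) ω
              * (B (n+1) i ω : ℝ≥0∞) * E'.indicator (fun _ => (1:ℝ≥0∞)) (fun j => A j ω))
            (fun i _ => ((measurable_const.indicator (hZset z)).mul
            (hBm i)).mul hφAv)]
        rw [Finset.sum_congr rfl (fun i _ => bpreR μ hmeasA hmeasB hA01 hcond n i E' hE' _
          (bpreZ_meas hZ0 hZrec n z))]
        rw [Finset.sum_const, Finset.card_range, nsmul_eq_mul]
        push_cast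
        ring
    _ = ∑' z : ℕ, ∫⁻ ω, ((z:ℝ≥0∞) + 1)
          * (({ω' | Z n ω' = z}).indicator (fun _ => (1:ℝ≥0∞)) ω
            * ENNReal.ofReal ((1 - A (n:ℤ) ω) / A (n:ℤ) ω)
            * E'.indicator (fun _ => (1:ℝ≥0∞)) (fun j => A j ω)) ∂μ := by
        apply tsum_congr
        intro z
        rw [lintegral_const_mul _ (hmeasU z)]
    _ = ∫⁻ ω, ∑' z : ℕ, ((z:ℝ≥0∞) + 1)
          * (({ω' | Z n ω' = z}).indicator (fun _ => (1:ℝ≥0∞)) ω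
            * ENNReal.ofReal ((1 - A (n:ℤ) ω) / A (n:ℤ) ω)
            * E'.indicator (fun _ => (1:ℝ≥0∞)) (fun j => A j ω)) ∂μ :=
        (lintegral_tsum (fun z => (measurable_const.mul (hmeasU z)).aemeasurable)).symm
    _ = ∫⁻ ω, ((Z n ω : ℝ≥0∞) + 1) * ENNReal.ofReal ((1 - A (n:ℤ) ω) / A (n:ℤ) ω)
          * E'.indicator (fun _ => (1:ℝ≥0∞)) (fun j => A j ω) ∂μ := by
        apply lintegral_congr
        intro ω
        rw [tsum_eq_single (Z n ω) ?_]
        · rw [Set.indicator_of_mem (show ω ∈ {ω' | Z n ω' = Z n ω} from rfl)]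
          ring
        · intro z hz
          rw [Set.indicator_of_notMem (show ω ∉ {ω' | Z n ω' = z} from fun h => hz h.symm)]
          ring

lemma bpreEnv_meas (l : ℕ) (c : ℝ) :
    MeasurableSet {a : ℤ → ℝ | ∀ j ∈ Finset.range l, (1 - a (j:ℤ)) / a (j:ℤ) ≤ Real.exp c} := by
  have : {a : ℤ → ℝ | ∀ j ∈ Finset.range l, (1 - a (j:ℤ)) / a (j:ℤ) ≤ Real.exp c}
      = ⋂ j ∈ Finset.range l, {a : ℤ → ℝ | (1 - a (j:ℤ)) / a (j:ℤ) ≤ Real.exp c} := by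
    ext a; simp
  rw [this]
  exact MeasurableSet.biInter (Finset.range l).countable_toSet
    (fun j _ => measurableSet_le
      ((measurable_const.sub (measurable_pi_apply _)).div (measurable_pi_apply _))
      measurable_const)

lemma bpreZm (hmeasB : ∀ n i, Measurable (B n i)) (hZ0 : ∀ ω, Z 0 ω = 0)
    (hZrec : ∀ n ω, Z (n + 1) ω = ∑ i ∈ Finset.range (Z n ω + 1), B (n + 1) i ω)
    (n : ℕ) : Measurable (Z n) := by
  apply measurable_to_countable'
  intro z
  have : Z n ⁻¹' {z} = {ω | Z n ω = z} := by ext ω; simp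
  rw [this]
  exact bpreMS_le hmeasB n _ (bpreZ_meas hZ0 hZrec n z)

lemma bpreBound (hmeasA : ∀ i, Measurable (A i)) (hmeasB : ∀ n i, Measurable (B n i))
    (hA01 : ∀ i ω, A i ω ∈ Set.Ioo (0:ℝ) 1)
    (hcond : ∀ (s : Finset (ℕ × ℕ)) (k : ℕ × ℕ → ℕ) (E : Set (ℤ → ℝ)),
      MeasurableSet E →
      μ {ω | (∀ p ∈ s, B p.1 p.2 ω = k p) ∧ (fun i => A i ω) ∈ E}
        = ∫⁻ ω in {ω | (fun i => A i ω) ∈ E},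
            ∏ p ∈ s, ENNReal.ofReal
              (A ((p.1 : ℤ) - 1) ω * (1 - A ((p.1 : ℤ) - 1) ω) ^ k p) ∂μ)
    (hZ0 : ∀ ω, Z 0 ω = 0)
    (hZrec : ∀ n ω, Z (n + 1) ω = ∑ i ∈ Finset.range (Z n ω + 1), B (n + 1) i ω)
    (l : ℕ) (c : ℝ) (hc : 0 ≤ c) :
    ∀ n, n ≤ l →
    ∫⁻ ω, (Z n ω : ℝ≥0∞) * ({a : ℤ → ℝ | ∀ j ∈ Finset.range l,
        (1 - a (j:ℤ)) / a (j:ℤ) ≤ Real.exp c}).indicator (fun _ => (1:ℝ≥0∞)) (fun j => A j ω) ∂μ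
      ≤ (n : ℝ≥0∞) * ENNReal.ofReal (Real.exp c) ^ n := by
  classical
  set E' := {a : ℤ → ℝ | ∀ j ∈ Finset.range l, (1 - a (j:ℤ)) / a (j:ℤ) ≤ Real.exp c} with hE'def
  have hE' : MeasurableSet E' := bpreEnv_meas l c
  have hAv : Measurable (fun ω => (fun j => A j ω) : Ω → ℤ → ℝ) :=
    measurable_pi_lambda _ hmeasA
  have hφE : Measurable (E'.indicator (fun _ => (1:ℝ≥0∞))) := measurable_const.indicator hE'
  have hφAv : Measurable (fun ω : Ω => E'.indicator (fun _ => (1:ℝ≥0∞)) (fun j => A j ω)) :=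
    hφE.comp hAv
  set C := ENNReal.ofReal (Real.exp c) with hCdef
  have hC1 : 1 ≤ C := ENNReal.one_le_ofReal.2 (Real.one_le_exp hc)
  intro n
  induction n with
  | zero =>
      intro _
      have h0 : ∀ ω, (Z 0 ω : ℝ≥0∞)
          * E'.indicator (fun _ => (1:ℝ≥0∞)) (fun j => A j ω) = 0 := by
        intro ω; rw [hZ0]; simp
      rw [lintegral_congr h0, lintegral_zero]
      exact zero_le
  | succ n ih =>
      intro hn1
      have hn : n ≤ l := le_trans (Nat.le_succ n) hn1
      have hnl : n < l := lt_of_lt_of_le (Nat.lt_succ_self n) hn1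
      have hZm : Measurable (fun ω => (Z n ω : ℝ≥0∞)) :=
        measurable_from_top.comp (bpreZm hmeasB hZ0 hZrec n)
      rw [bpreRec μ hmeasA hmeasB hA01 hcond hZ0 hZrec E' hE' n]
      have hptw : ∀ ω, ((Z n ω : ℝ≥0∞) + 1) * ENNReal.ofReal ((1 - A (n:ℤ) ω) / A (n:ℤ) ω)
          * E'.indicator (fun _ => (1:ℝ≥0∞)) (fun j => A j ω)
          ≤ C * (((Z n ω : ℝ≥0∞) + 1)
            * E'.indicator (fun _ => (1:ℝ≥0∞)) (fun j => A j ω)) := by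
        intro ω
        by_cases h : (fun j => A j ω) ∈ E'
        · rw [Set.indicator_of_mem h, mul_one, mul_one]
          have hg : ENNReal.ofReal ((1 - A (n:ℤ) ω) / A (n:ℤ) ω) ≤ C :=
            ENNReal.ofReal_le_ofReal (h n (Finset.mem_range.2 hnl))
          calc ((Z n ω : ℝ≥0∞) + 1) * ENNReal.ofReal ((1 - A (n:ℤ) ω) / A (n:ℤ) ω)
              ≤ ((Z n ω : ℝ≥0∞) + 1) * C := mul_le_mul_right hg _
            _ = C * ((Z n ω : ℝ≥0∞) + 1) := mul_comm _ _
        · rw [Set.indicator_of_notMem h, mul_zero, mul_zero, mul_zero]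
      calc ∫⁻ ω, ((Z n ω : ℝ≥0∞) + 1) * ENNReal.ofReal ((1 - A (n:ℤ) ω) / A (n:ℤ) ω)
            * E'.indicator (fun _ => (1:ℝ≥0∞)) (fun j => A j ω) ∂μ
          ≤ ∫⁻ ω, C * (((Z n ω : ℝ≥0∞) + 1)
            * E'.indicator (fun _ => (1:ℝ≥0∞)) (fun j => A j ω)) ∂μ := lintegral_mono hptw
        _ = C * ∫⁻ ω, ((Z n ω : ℝ≥0∞) + 1)
            * E'.indicator (fun _ => (1:ℝ≥0∞)) (fun j => A j ω) ∂μ :=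
            lintegral_const_mul _ ((hZm.add measurable_const).mul hφAv)
        _ = C * (∫⁻ ω, (Z n ω : ℝ≥0∞)
              * E'.indicator (fun _ => (1:ℝ≥0∞)) (fun j => A j ω) ∂μ
            + ∫⁻ ω, E'.indicator (fun _ => (1:ℝ≥0∞)) (fun j => A j ω) ∂μ) := by
            congr 1
            rw [← lintegral_add_left (f := fun ω => (Z n ω : ℝ≥0∞)
                * E'.indicator (fun _ => (1:ℝ≥0∞)) (fun j => A j ω)) (hZm.mul hφAv)]
            apply lintegral_congr
            intro ω
            ring
        _ ≤ C * ((n : ℝ≥0∞) * C ^ n + 1) := by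
            apply mul_le_mul_right
            apply add_le_add (ih hn)
            calc ∫⁻ ω, E'.indicator (fun _ => (1:ℝ≥0∞)) (fun j => A j ω) ∂μ
                ≤ ∫⁻ _, 1 ∂μ := lintegral_mono (fun ω => by
                  by_cases h : (fun j => A j ω) ∈ E'
                  · rw [Set.indicator_of_mem h]
                  · rw [Set.indicator_of_notMem h]; exact zero_le_one)
              _ = 1 := by rw [lintegral_one, measure_univ]
        _ ≤ ((n:ℕ)+1 : ℝ≥0∞) * C ^ (n+1) := by
            have hCn : C ≤ C ^ (n+1) := by
              conv_lhs => rw [← pow_one C]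
              exact pow_le_pow_right₀ hC1 (by omega)
            calc C * ((n : ℝ≥0∞) * C ^ n + 1) = (n : ℝ≥0∞) * C ^ (n+1) + C := by ring
              _ ≤ (n : ℝ≥0∞) * C ^ (n+1) + C ^ (n+1) := add_le_add le_rfl hCn
              _ = ((n:ℕ)+1 : ℝ≥0∞) * C ^ (n+1) := by ring
        _ = ((n+1 : ℕ) : ℝ≥0∞) * C ^ (n+1) := by push_cast; ring

lemma bpreTail (hmeasA : ∀ i, Measurable (A i)) (hmeasB : ∀ n i, Measurable (B n i))
    (hA01 : ∀ i ω, A i ω ∈ Set.Ioo (0:ℝ) 1)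
    (hident : ∀ i, Measure.map (A i) μ = Measure.map (A 0) μ)
    (hcond : ∀ (s : Finset (ℕ × ℕ)) (k : ℕ × ℕ → ℕ) (E : Set (ℤ → ℝ)),
      MeasurableSet E →
      μ {ω | (∀ p ∈ s, B p.1 p.2 ω = k p) ∧ (fun i => A i ω) ∈ E}
        = ∫⁻ ω in {ω | (fun i => A i ω) ∈ E},
            ∏ p ∈ s, ENNReal.ofReal
              (A ((p.1 : ℤ) - 1) ω * (1 - A ((p.1 : ℤ) - 1) ω) ^ k p) ∂μ)
    (hZ0 : ∀ ω, Z 0 ω = 0)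
    (hZrec : ∀ n ω, Z (n + 1) ω = ∑ i ∈ Finset.range (Z n ω + 1), B (n + 1) i ω)
    (l : ℕ) (c : ℝ) (hc : 0 ≤ c) (m : ℕ) (hm : 1 ≤ m) :
    μ {ω | m ≤ Z l ω} ≤ (l : ℝ≥0∞) * μ {ω | c < Real.log ((1 - A 0 ω) / A 0 ω)}
      + ((l : ℝ≥0∞) * ENNReal.ofReal (Real.exp c) ^ l) / (m : ℝ≥0∞) := by
  classical
  set E' := {a : ℤ → ℝ | ∀ j ∈ Finset.range l, (1 - a (j:ℤ)) / a (j:ℤ) ≤ Real.exp c} with hE'def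
  have hE' : MeasurableSet E' := bpreEnv_meas l c
  have hAv : Measurable (fun ω => (fun j => A j ω) : Ω → ℤ → ℝ) :=
    measurable_pi_lambda _ hmeasA
  set G := (fun ω => (fun j => A j ω)) ⁻¹' E' with hGdef
  have hGm : MeasurableSet G := hAv hE'
  have hSm : MeasurableSet {ω | m ≤ Z l ω} := by
    have h : {ω | m ≤ Z l ω} = ⋃ z : ℕ, ⋃ (_ : m ≤ z), {ω | Z l ω = z} := by
      ext ω; simp
    rw [h]
    exact MeasurableSet.iUnion (fun z => MeasurableSet.iUnion
      (fun _ => bpreMS_le hmeasB l _ (bpreZ_meas hZ0 hZrec l z)))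
  -- split
  have hsplit : μ {ω | m ≤ Z l ω} ≤ μ Gᶜ + μ ({ω | m ≤ Z l ω} ∩ G) := by
    calc μ {ω | m ≤ Z l ω} ≤ μ (Gᶜ ∪ ({ω | m ≤ Z l ω} ∩ G)) := by
          apply measure_mono
          intro ω h
          by_cases hg : ω ∈ G
          · exact Or.inr ⟨h, hg⟩
          · exact Or.inl hg
      _ ≤ μ Gᶜ + μ ({ω | m ≤ Z l ω} ∩ G) := measure_union_le _ _
  -- bad env bound
  have hbad : μ Gᶜ ≤ (l : ℝ≥0∞) * μ {ω | c < Real.log ((1 - A 0 ω) / A 0 ω)} := by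
    set Sbad := {x : ℝ | Real.exp c < (1 - x) / x} with hSbaddef
    have hSbad : MeasurableSet Sbad :=
      measurableSet_lt measurable_const
        ((measurable_const.sub measurable_id).div measurable_id)
    have hsub : Gᶜ ⊆ ⋃ j ∈ Finset.range l, (A (j:ℤ)) ⁻¹' Sbad := by
      intro ω h
      simp only [hGdef, mem_compl_iff, mem_preimage, hE'def, mem_setOf_eq, not_forall] at h
      obtain ⟨j, hj, hgt⟩ := h
      simp only [mem_iUnion]
      exact ⟨j, hj, not_le.1 hgt⟩
    have heach : ∀ j : ℕ, μ ((A (j:ℤ)) ⁻¹' Sbad) = μ {ω | c < Real.log ((1 - A 0 ω) / A 0 ω)} := by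
      intro j
      have h1 : μ ((A (j:ℤ)) ⁻¹' Sbad) = μ ((A 0) ⁻¹' Sbad) := by
        rw [← Measure.map_apply (hmeasA _) hSbad, hident (j:ℤ),
          Measure.map_apply (hmeasA 0) hSbad]
      rw [h1]
      congr 1
      ext ω
      have ha := hA01 0 ω
      have hpos : 0 < (1 - A 0 ω) / A 0 ω := div_pos (by linarith [ha.2]) ha.1
      simp only [mem_preimage, hSbaddef, mem_setOf_eq]
      exact (Real.lt_log_iff_exp_lt hpos).symm
    calc μ Gᶜ ≤ μ (⋃ j ∈ Finset.range l, (A (j:ℤ)) ⁻¹' Sbad) := measure_mono hsub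
      _ ≤ ∑ j ∈ Finset.range l, μ ((A (j:ℤ)) ⁻¹' Sbad) := measure_biUnion_finset_le _ _
      _ = ∑ _j ∈ Finset.range l, μ {ω | c < Real.log ((1 - A 0 ω) / A 0 ω)} :=
          Finset.sum_congr rfl (fun j _ => heach j)
      _ = (l : ℝ≥0∞) * μ {ω | c < Real.log ((1 - A 0 ω) / A 0 ω)} := by
          rw [Finset.sum_const, Finset.card_range, nsmul_eq_mul]
  -- Markov
  have hmark : μ ({ω | m ≤ Z l ω} ∩ G)
      ≤ ((l : ℝ≥0∞) * ENNReal.ofReal (Real.exp c) ^ l) / (m : ℝ≥0∞) := by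
    have h1 : (m:ℝ≥0∞) * μ ({ω | m ≤ Z l ω} ∩ G)
        ≤ ∫⁻ ω, (Z l ω : ℝ≥0∞) * E'.indicator (fun _ => (1:ℝ≥0∞)) (fun j => A j ω) ∂μ := by
      have h2 := lintegral_indicator_const (μ := μ) (hSm.inter hGm) ((m:ℕ):ℝ≥0∞)
      rw [← h2]
      apply lintegral_mono
      intro ω
      by_cases h : ω ∈ {ω | m ≤ Z l ω} ∩ G
      · simp only [Set.indicator_of_mem h,
          Set.indicator_of_mem (show (fun j => A j ω) ∈ E' from h.2), mul_one]
        exact Nat.cast_le.2 h.1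
      · rw [Set.indicator_of_notMem h]
        exact zero_le
    have h3 := bpreBound μ hmeasA hmeasB hA01 hcond hZ0 hZrec l c hc l le_rfl
    have h4 : (m:ℝ≥0∞) * μ ({ω | m ≤ Z l ω} ∩ G)
        ≤ (l : ℝ≥0∞) * ENNReal.ofReal (Real.exp c) ^ l := le_trans h1 h3
    rw [ENNReal.le_div_iff_mul_le (Or.inl (show (m:ℝ≥0∞) ≠ 0 from
        Nat.cast_ne_zero.2 (by omega))) (Or.inl (ENNReal.natCast_ne_top m))]
    calc μ ({ω | m ≤ Z l ω} ∩ G) * (m:ℝ≥0∞) = (m:ℝ≥0∞) * μ ({ω | m ≤ Z l ω} ∩ G) :=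
          mul_comm _ _
      _ ≤ (l : ℝ≥0∞) * ENNReal.ofReal (Real.exp c) ^ l := h4
  calc μ {ω | m ≤ Z l ω} ≤ μ Gᶜ + μ ({ω | m ≤ Z l ω} ∩ G) := hsplit
    _ ≤ (l : ℝ≥0∞) * μ {ω | c < Real.log ((1 - A 0 ω) / A 0 ω)}
        + ((l : ℝ≥0∞) * ENNReal.ofReal (Real.exp c) ^ l) / (m : ℝ≥0∞) :=
        add_le_add hbad hmark

end Core

theorem bpre_tail_upper
    {Ω : Type*} [MeasurableSpace Ω] (μ : Measure Ω) [IsProbabilityMeasure μ]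
    (A : ℤ → Ω → ℝ) (B : ℕ → ℕ → Ω → ℕ) (Z : ℕ → Ω → ℕ)
    (α η : ℝ) (hα : 1 < α) (hη : 0 < η)
    (L : ℝ → ℝ) (hLpos : ∀ x, 0 < L x) (hLmeas : Measurable L)
    (hsv : ∀ t > (0:ℝ), Tendsto (fun x => L (t * x) / L x) atTop (nhds 1))
    (hmeasA : ∀ i, Measurable (A i)) (hmeasB : ∀ n i, Measurable (B n i))
    (hA01 : ∀ i ω, A i ω ∈ Set.Ioo (0:ℝ) 1)
    (hiid : iIndepFun A μ)
    (hident : ∀ i, Measure.map (A i) μ = Measure.map (A 0) μ)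
    (htail : ∀ x > η,
      (μ {ω | x < Real.log ((1 - A 0 ω) / A 0 ω)}).toReal = x ^ (-α) * L x)
    (hmean : ∫ ω, Real.log ((1 - A 0 ω) / A 0 ω) ∂μ < 0)
    (hZ0 : ∀ ω, Z 0 ω = 0)
    (hZrec : ∀ n ω, Z (n + 1) ω = ∑ i ∈ Finset.range (Z n ω + 1), B (n + 1) i ω)
    (hcond : ∀ (s : Finset (ℕ × ℕ)) (k : ℕ × ℕ → ℕ) (E : Set (ℤ → ℝ)),
      MeasurableSet E →
      μ {ω | (∀ p ∈ s, B p.1 p.2 ω = k p) ∧ (fun i => A i ω) ∈ E}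
        = ∫⁻ ω in {ω | (fun i => A i ω) ∈ E},
            ∏ p ∈ s, ENNReal.ofReal
              (A ((p.1 : ℤ) - 1) ω * (1 - A ((p.1 : ℤ) - 1) ω) ^ k p) ∂μ)
    (l : ℕ) (hl : 2 ≤ l) :
    Filter.limsup
      (fun m : ℕ =>
        (μ {ω | m ≤ Z l ω}).toReal /
          ((Real.log^[l] m) ^ (-α) * L (Real.log^[l] m)))
      atTop
      ≤ ∑ t ∈ Finset.range l, α ^ (-α * (t : ℝ)) := by
  classical
  obtain ⟨r, hr⟩ : ∃ r, l = r + 1 := ⟨l - 1, by omega⟩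
  have hr1 : 1 ≤ r := by omega
  have hl0 : 0 < l := by omega
  set T : ℝ → ℝ := fun x => (μ {ω | x < Real.log ((1 - A 0 ω) / A 0 ω)}).toReal with hTdef
  have hTmono : ∀ ⦃u v' : ℝ⦄, u ≤ v' → T v' ≤ T u := by
    intro u v' huv
    apply ENNReal.toReal_mono (measure_ne_top μ _)
    exact measure_mono (fun ω h => lt_of_le_of_lt huv h)
  obtain ⟨c₀, hc₀, x₀, hx₀1, hTlb⟩ :=
    aux_tail_lb α hα L hLpos (hsv _ (Real.exp_pos 1)) T hTmono η htail
  set K : ℝ := 2 * (l:ℝ) with hKdef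
  have hl2 : (2:ℝ) ≤ (l:ℝ) := by exact_mod_cast hl
  have hK1 : 1 ≤ K := by rw [hKdef]; nlinarith
  have hK0 : 0 < K := lt_of_lt_of_le one_pos hK1
  set N₁ : ℕ := 2 * l * l with hN₁def
  set N₂ : ℕ := ⌈α⌉₊ + 1 with hN₂def
  set N : ℕ := N₁ + N₂ with hNdef
  set g : ℕ → ℝ := fun m => (l:ℝ) * K^(-α) * (L (K * Real.log^[l] (m:ℝ)) / L (Real.log^[l] (m:ℝ)))
      + ((l:ℝ)/c₀) * (Real.log (m:ℝ))^N / (m:ℝ) with hgdef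
  have hvT : Tendsto (fun m : ℕ => Real.log^[l] (m:ℝ)) atTop atTop :=
    (aux_iterlog_tendsto l).comp tendsto_natCast_atTop_atTop
  have hglim : Tendsto g atTop (nhds ((l:ℝ) * K^(-α))) := by
    have h1 : Tendsto (fun m : ℕ => L (K * Real.log^[l] (m:ℝ)) / L (Real.log^[l] (m:ℝ)))
        atTop (nhds 1) := (hsv K hK0).comp hvT
    have h2 : Tendsto (fun m : ℕ => ((l:ℝ)/c₀) * (Real.log (m:ℝ))^N / (m:ℝ)) atTop (nhds 0) := by
      have h3 := Real.tendsto_pow_log_div_mul_add_atTop 1 0 N one_ne_zero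
      have h4 := h3.comp (tendsto_natCast_atTop_atTop (R := ℝ))
      simp only [Function.comp, one_mul, add_zero] at h4
      have h5 := h4.const_mul ((l:ℝ)/c₀)
      rw [mul_zero] at h5
      exact h5.congr (fun m => (mul_div_assoc _ _ _).symm)
    have h6 := ((tendsto_const_nhds (x := (l:ℝ) * K^(-α)) (f := atTop)).mul h1).add h2
    rw [mul_one, add_zero] at h6
    exact h6.congr (fun m => by rw [hgdef])
  have hev : ∀ᶠ m : ℕ in atTop, (μ {ω | m ≤ Z l ω}).toReal /
      ((Real.log^[l] (m:ℝ)) ^ (-α) * L (Real.log^[l] (m:ℝ))) ≤ g m := by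
    filter_upwards [(Set.finite_Iic l).eventually_all.2
        (fun i _ => ((aux_iterlog_tendsto i).comp
          (tendsto_natCast_atTop_atTop (R := ℝ))).eventually_ge_atTop 1),
      hvT.eventually_gt_atTop η, hvT.eventually_ge_atTop x₀, eventually_ge_atTop 1]
      with m hIter hvη hvx₀ hm1
    have hv1 : 1 ≤ Real.log^[l] (m:ℝ) := hIter l (Set.mem_Iic.2 le_rfl)
    have hv0 : (0:ℝ) < Real.log^[l] (m:ℝ) := lt_of_lt_of_le one_pos hv1
    have hw1 : 1 ≤ Real.log^[r] (m:ℝ) := hIter r (Set.mem_Iic.2 (by omega))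
    have hw0 : (0:ℝ) < Real.log^[r] (m:ℝ) := lt_of_lt_of_le one_pos hw1
    have hlog1 : 1 ≤ Real.log (m:ℝ) := by
      have := hIter 1 (Set.mem_Iic.2 (by omega))
      simpa using this
    have hlog0 : (0:ℝ) ≤ Real.log (m:ℝ) := le_trans zero_le_one hlog1
    have hwlog : Real.log^[r] (m:ℝ) ≤ Real.log (m:ℝ) := by
      have h := aux_iterlog_chain (m:ℝ) 1 r hr1
        (fun t ht1 ht2 => le_trans zero_le_one (hIter t (Set.mem_Iic.2 (by omega))))
      simpa using h
    have hvlog : Real.log^[l] (m:ℝ) ≤ Real.log (m:ℝ) := by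
      have h := aux_iterlog_chain (m:ℝ) 1 l (by omega)
        (fun t ht1 ht2 => le_trans zero_le_one (hIter t (Set.mem_Iic.2 (by omega))))
      simpa using h
    have hexpv : Real.exp (Real.log^[l] (m:ℝ)) = Real.log^[r] (m:ℝ) := by
      rw [hr, Function.iterate_succ_apply']
      exact Real.exp_log hw0
    have hcη : η < K * Real.log^[l] (m:ℝ) :=
      lt_of_lt_of_le hvη (le_mul_of_one_le_left hv0.le hK1)
    have hc0 : (0:ℝ) ≤ K * Real.log^[l] (m:ℝ) := (mul_pos hK0 hv0).le
    -- numerator bound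
    have htailineq := bpreTail μ hmeasA hmeasB hA01 hident hcond hZ0 hZrec l
      (K * Real.log^[l] (m:ℝ)) hc0 m hm1
    have hnum : (μ {ω | m ≤ Z l ω}).toReal
        ≤ (l:ℝ) * T (K * Real.log^[l] (m:ℝ))
          + (l:ℝ) * (Real.exp (K * Real.log^[l] (m:ℝ)))^l / (m:ℝ) := by
      have hfin1 : (l:ℝ≥0∞) * μ {ω | K * Real.log^[l] (m:ℝ)
          < Real.log ((1 - A 0 ω) / A 0 ω)} ≠ ∞ :=
        ENNReal.mul_ne_top (ENNReal.natCast_ne_top l) (measure_ne_top μ _)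
      have hfin2 : ((l:ℝ≥0∞) * ENNReal.ofReal (Real.exp (K * Real.log^[l] (m:ℝ)))^l)
          / (m:ℝ≥0∞) ≠ ∞ := by
        apply ne_of_lt
        apply ENNReal.div_lt_top
        · exact ENNReal.mul_ne_top (ENNReal.natCast_ne_top l)
            (ENNReal.pow_ne_top ENNReal.ofReal_ne_top)
        · exact Nat.cast_ne_zero.2 (by omega)
      have h := ENNReal.toReal_mono (by
        exact ENNReal.add_ne_top.2 ⟨hfin1, hfin2⟩) htailineq
      rw [ENNReal.toReal_add hfin1 hfin2, ENNReal.toReal_mul, ENNReal.toReal_div,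
        ENNReal.toReal_mul, ENNReal.toReal_pow, ENNReal.toReal_ofReal (Real.exp_pos _).le,
        ENNReal.toReal_natCast, ENNReal.toReal_natCast] at h
      exact h
    have hD : (Real.log^[l] (m:ℝ))^(-α) * L (Real.log^[l] (m:ℝ)) = T (Real.log^[l] (m:ℝ)) :=
      (htail _ hvη).symm
    have hDpos : 0 < T (Real.log^[l] (m:ℝ)) := by
      rw [← hD]
      exact mul_pos (Real.rpow_pos_of_pos hv0 _) (hLpos _)
    rw [hgdef, hD]
    have htail' : ∀ x, x > η → T x = x ^ (-α) * L x := fun x hx => htail x hx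
    have hterm1 : (l:ℝ) * T (K * Real.log^[l] (m:ℝ)) / T (Real.log^[l] (m:ℝ))
        = (l:ℝ) * K^(-α) * (L (K * Real.log^[l] (m:ℝ)) / L (Real.log^[l] (m:ℝ))) := by
      rw [htail' _ hcη, ← hD, Real.mul_rpow hK0.le hv0.le]
      have h1 := (Real.rpow_pos_of_pos hv0 (-α)).ne'
      have h2 := (hLpos (Real.log^[l] (m:ℝ))).ne'
      field_simp
    have hXeq : (Real.exp (K * Real.log^[l] (m:ℝ)))^l = (Real.log^[r] (m:ℝ))^N₁ := by
      rw [← Real.exp_nat_mul]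
      have h1 : (l:ℝ) * (K * Real.log^[l] (m:ℝ)) = (N₁:ℝ) * Real.log^[l] (m:ℝ) := by
        rw [hKdef, hN₁def]; push_cast; ring
      rw [h1, Real.exp_nat_mul, hexpv]
    have hwb : (Real.log^[r] (m:ℝ))^N₁ ≤ (Real.log (m:ℝ))^N₁ :=
      pow_le_pow_left₀ hw0.le hwlog N₁
    have hvb : (Real.log^[l] (m:ℝ)) ^ (α+1) ≤ (Real.log (m:ℝ))^N₂ := by
      calc (Real.log^[l] (m:ℝ)) ^ (α+1) ≤ (Real.log^[l] (m:ℝ)) ^ ((N₂:ℝ)) := by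
            apply Real.rpow_le_rpow_of_exponent_le hv1
            rw [hN₂def]
            push_cast
            linarith [Nat.le_ceil α]
        _ ≤ (Real.log (m:ℝ)) ^ ((N₂:ℝ)) :=
            Real.rpow_le_rpow hv0.le hvlog (by positivity)
        _ = (Real.log (m:ℝ))^N₂ := Real.rpow_natCast _ _
    have hterm2 : (l:ℝ) * (Real.exp (K * Real.log^[l] (m:ℝ)))^l / (m:ℝ)
          / T (Real.log^[l] (m:ℝ))
        ≤ ((l:ℝ)/c₀) * (Real.log (m:ℝ))^N / (m:ℝ) := by
      have hm0 : (0:ℝ) < (m:ℝ) := by exact_mod_cast (by omega : 0 < m)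
      have hX0 : (0:ℝ) ≤ (l:ℝ) * (Real.exp (K * Real.log^[l] (m:ℝ)))^l / (m:ℝ) := by positivity
      have hlb := hTlb _ hvx₀
      have hlbpos : 0 < c₀ * (Real.log^[l] (m:ℝ)) ^ (-(α+1)) :=
        mul_pos hc₀ (Real.rpow_pos_of_pos hv0 _)
      calc (l:ℝ) * (Real.exp (K * Real.log^[l] (m:ℝ)))^l / (m:ℝ) / T (Real.log^[l] (m:ℝ))
          ≤ (l:ℝ) * (Real.exp (K * Real.log^[l] (m:ℝ)))^l / (m:ℝ)
            / (c₀ * (Real.log^[l] (m:ℝ)) ^ (-(α+1))) := by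
            apply div_le_div_of_nonneg_left hX0 hlbpos hlb
        _ = ((l:ℝ) * (Real.exp (K * Real.log^[l] (m:ℝ)))^l / (m:ℝ))
            * (Real.log^[l] (m:ℝ)) ^ (α+1) / c₀ := by
            rw [show (-(α+1)) = -(α+1) from rfl, Real.rpow_neg hv0.le]
            field_simp
        _ ≤ ((l:ℝ) * (Real.log (m:ℝ))^N₁ / (m:ℝ)) * (Real.log (m:ℝ))^N₂ / c₀ := by
            apply div_le_div_of_nonneg_right ?_ hc₀.le
            apply mul_le_mul ?_ hvb (Real.rpow_pos_of_pos hv0 _).le (by positivity)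
            apply div_le_div_of_nonneg_right ?_ hm0.le
            rw [hXeq]
            exact mul_le_mul_of_nonneg_left hwb (Nat.cast_nonneg l)
        _ = ((l:ℝ)/c₀) * (Real.log (m:ℝ))^N / (m:ℝ) := by
            rw [hNdef, pow_add]
            field_simp
            ring
    calc (μ {ω | m ≤ Z l ω}).toReal / T (Real.log^[l] (m:ℝ))
        ≤ ((l:ℝ) * T (K * Real.log^[l] (m:ℝ))
            + (l:ℝ) * (Real.exp (K * Real.log^[l] (m:ℝ)))^l / (m:ℝ))
          / T (Real.log^[l] (m:ℝ)) := by
          apply div_le_div_of_nonneg_right hnum hDpos.le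
      _ = (l:ℝ) * T (K * Real.log^[l] (m:ℝ)) / T (Real.log^[l] (m:ℝ))
          + (l:ℝ) * (Real.exp (K * Real.log^[l] (m:ℝ)))^l / (m:ℝ)
            / T (Real.log^[l] (m:ℝ)) := by rw [add_div]
      _ ≤ (l:ℝ) * K^(-α) * (L (K * Real.log^[l] (m:ℝ)) / L (Real.log^[l] (m:ℝ)))
          + ((l:ℝ)/c₀) * (Real.log (m:ℝ))^N / (m:ℝ) :=
          add_le_add (le_of_eq hterm1) hterm2
  have hcobdd : IsCoboundedUnder (· ≤ ·) atTop (fun m : ℕ =>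
      (μ {ω | m ≤ Z l ω}).toReal /
        ((Real.log^[l] (m:ℝ)) ^ (-α) * L (Real.log^[l] (m:ℝ)))) := by
    apply isCoboundedUnder_le_of_eventually_le atTop (x := 0)
    filter_upwards [hvT.eventually_gt_atTop 0] with m hv0
    apply div_nonneg ENNReal.toReal_nonneg
    exact (mul_pos (Real.rpow_pos_of_pos hv0 _) (hLpos _)).le
  have hfinal : Filter.limsup (fun m : ℕ =>
      (μ {ω | m ≤ Z l ω}).toReal /
        ((Real.log^[l] (m:ℝ)) ^ (-α) * L (Real.log^[l] (m:ℝ)))) atTop ≤ (l:ℝ) * K^(-α) := by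
    calc Filter.limsup (fun m : ℕ =>
        (μ {ω | m ≤ Z l ω}).toReal /
          ((Real.log^[l] (m:ℝ)) ^ (-α) * L (Real.log^[l] (m:ℝ)))) atTop
        ≤ Filter.limsup g atTop :=
          limsup_le_limsup hev hcobdd hglim.isBoundedUnder_le
      _ = (l:ℝ) * K^(-α) := hglim.limsup_eq
  have hhalf : (l:ℝ) * K^(-α) ≤ 1 := by
    have h1 : K^(-α) ≤ K^(-1:ℝ) :=
      Real.rpow_le_rpow_of_exponent_le hK1 (by linarith)
    have h2 : K^(-1:ℝ) = K⁻¹ := Real.rpow_neg_one K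
    have h3 : (l:ℝ) * K⁻¹ = 1/2 := by
      rw [hKdef]
      field_simp
    calc (l:ℝ) * K^(-α) ≤ (l:ℝ) * K⁻¹ := by
          rw [← h2]
          exact mul_le_mul_of_nonneg_left h1 (Nat.cast_nonneg l)
      _ = 1/2 := h3
      _ ≤ 1 := by norm_num
  have hone : (1:ℝ) ≤ ∑ t ∈ Finset.range l, α ^ (-α * (t:ℝ)) := by
    have h0mem : 0 ∈ Finset.range l := Finset.mem_range.2 hl0
    have hnn : ∀ t ∈ Finset.range l, (0:ℝ) ≤ α ^ (-α * (t:ℝ)) :=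
      fun t _ => Real.rpow_nonneg (by linarith) _
    have h := Finset.single_le_sum (f := fun t : ℕ => α ^ (-α * (t:ℝ))) hnn h0mem
    simpa using h
  exact hfinal.trans (hhalf.trans hone)
end
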